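/- arXiv:1907.02623 — 3 statements merged into one kernel-verified Lean document; each statement's English description precedes it below -/
import Mathlib

section
/- Let q be a prime power with q ≡ 3 (mod 4), let F be a finite field with q² elements, and fix a primitive element ω of F. For i ∈ {0,1,2,3}, let Dᵢ = Cᵢ⁽⁴⁾ ∪ C₍ᵢ₊₁ mod 4₎⁽⁴⁾. Then each Dᵢ is a Paley type partial difference set in (F,+): |Dᵢ| = (q²−1)/2, and for every nonzero x ∈ F, the number of pairs (u,v) ∈ Dᵢ × Dᵢ with u − v = x equals (q²−5)/4 if x ∈ Dᵢ and equals (q²−1)/4 if x ∉ Dᵢ. -/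
/-- The number of pairs `(u, v) ∈ A × B` with `u - v = g`. -/
noncomputable def diffCount {G : Type*} [AddGroup G] (A B : Set G) (g : G) : ℕ :=
  Set.ncard {p : G × G | p.1 ∈ A ∧ p.2 ∈ B ∧ p.1 - p.2 = g}

/-- The `N`-th cyclotomic class `C_i^{(N)} = {ω^(i+Nk) : k ∈ ℤ}`. -/
def cyc {F : Type*} [Field F] (ω : F) (N : ℕ) (i : ℤ) : Set F :=
  {x : F | ∃ k : ℤ, x = ω ^ (i + (N : ℤ) * k)}

namespace PDS

variable {F : Type*} [Field F] [Fintype F] [DecidableEq F]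

/-- cyclotomic-number-style count -/
def nn (L : F → ZMod 4) (r s : ZMod 4) : ℕ :=
  (Finset.univ.filter fun w : F => (w ≠ 0 ∧ L w = r) ∧ (1 + w ≠ 0 ∧ L (1 + w) = s)).card

structure Good (L : F → ZMod 4) (f : ℕ) : Prop where
  mul : ∀ x y : F, x ≠ 0 → y ≠ 0 → L (x * y) = L x + L y
  inv : ∀ x : F, x ≠ 0 → L x⁻¹ = - L x
  one : L 1 = 0
  neg1 : L (-1) = 0
  card : ∀ j, (Finset.univ.filter fun x : F => x ≠ 0 ∧ L x = j).card = f
  frob : ∃ σ : F →+* F, ∀ x : F, x ≠ 0 → L (σ x) = - L x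

variable {L : F → ZMod 4} {f : ℕ}

lemma Good.neg (h : Good L f) (x : F) (hx : x ≠ 0) : L (-x) = L x := by
  have h1 := h.mul (-1) x (by simp) hx
  rw [neg_one_mul] at h1
  rw [h1, h.neg1, zero_add]

lemma nn_symm (h : Good L f) (a b : ZMod 4) : nn L a b = nn L b a := by
  unfold nn
  refine Finset.card_bij' (fun w _ => -(1 + w)) (fun w _ => -(1 + w)) ?_ ?_ ?_ ?_
  · intro w hw
    simp only [Finset.mem_filter, Finset.mem_univ, true_and] at hw ⊢
    obtain ⟨⟨hw0, hwa⟩, hw10, hwb⟩ := hw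
    refine ⟨⟨neg_ne_zero.mpr hw10, by rw [h.neg _ hw10]; exact hwb⟩, ?_, ?_⟩
    · rw [show (1 : F) + -(1 + w) = -w by ring]; exact neg_ne_zero.mpr hw0
    · rw [show (1 : F) + -(1 + w) = -w by ring, h.neg _ hw0]; exact hwa
  · intro w hw
    simp only [Finset.mem_filter, Finset.mem_univ, true_and] at hw ⊢
    obtain ⟨⟨hw0, hwa⟩, hw10, hwb⟩ := hw
    refine ⟨⟨neg_ne_zero.mpr hw10, by rw [h.neg _ hw10]; exact hwb⟩, ?_, ?_⟩
    · rw [show (1 : F) + -(1 + w) = -w by ring]; exact neg_ne_zero.mpr hw0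
    · rw [show (1 : F) + -(1 + w) = -w by ring, h.neg _ hw0]; exact hwa
  · intro w _; ring
  · intro w _; ring

lemma nn_inv (h : Good L f) (a b : ZMod 4) : nn L a b = nn L (-a) (b - a) := by
  unfold nn
  refine Finset.card_bij' (fun w _ => w⁻¹) (fun w _ => w⁻¹) ?_ ?_ ?_ ?_
  · intro w hw
    simp only [Finset.mem_filter, Finset.mem_univ, true_and] at hw ⊢
    obtain ⟨⟨hw0, hwa⟩, hw10, hwb⟩ := hw
    have key : (1 : F) + w⁻¹ = w⁻¹ * (1 + w) := by
      rw [mul_add, mul_one, inv_mul_cancel₀ hw0, add_comm]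
    refine ⟨⟨inv_ne_zero hw0, by rw [h.inv _ hw0, hwa]⟩, ?_, ?_⟩
    · rw [key]; exact mul_ne_zero (inv_ne_zero hw0) hw10
    · rw [key, h.mul _ _ (inv_ne_zero hw0) hw10, h.inv _ hw0, hwa, hwb]; ring
  · intro w hw
    simp only [Finset.mem_filter, Finset.mem_univ, true_and] at hw ⊢
    obtain ⟨⟨hw0, hwa⟩, hw10, hwb⟩ := hw
    have key : (1 : F) + w⁻¹ = w⁻¹ * (1 + w) := by
      rw [mul_add, mul_one, inv_mul_cancel₀ hw0, add_comm]
    refine ⟨⟨inv_ne_zero hw0, by rw [h.inv _ hw0, hwa]; ring⟩, ?_, ?_⟩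
    · rw [key]; exact mul_ne_zero (inv_ne_zero hw0) hw10
    · rw [key, h.mul _ _ (inv_ne_zero hw0) hw10, h.inv _ hw0, hwa, hwb]; ring
  · intro w hw
    simp only [Finset.mem_filter, Finset.mem_univ, true_and] at hw
    exact inv_inv w
  · intro w _; exact inv_inv w

lemma nn_le_frob (h : Good L f) (a b : ZMod 4) : nn L a b ≤ nn L (-a) (-b) := by
  obtain ⟨σ, hσ⟩ := h.frob
  have hinj : Function.Injective σ := σ.injective
  unfold nn
  apply Finset.card_le_card_of_injOn σ
  · intro w hw
    simp only [Finset.mem_coe, Finset.mem_filter, Finset.mem_univ, true_and] at hw ⊢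
    obtain ⟨⟨hw0, hwa⟩, hw10, hwb⟩ := hw
    have hσ0 : σ w ≠ 0 := fun hh => hw0 (hinj (by rwa [map_zero]))
    have hσ10 : (1 : F) + σ w = σ (1 + w) := by rw [map_add, map_one]
    refine ⟨⟨hσ0, by rw [hσ _ hw0, hwa]⟩, ?_, ?_⟩
    · rw [hσ10]; exact fun hh => hw10 (hinj (by rwa [map_zero]))
    · rw [hσ10, hσ _ hw10, hwb]
  · exact fun x _ y _ hxy => hinj hxy

lemma nn_frob (h : Good L f) (a b : ZMod 4) : nn L a b = nn L (-a) (-b) := by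
  refine le_antisymm (nn_le_frob h a b) ?_
  have := nn_le_frob h (-a) (-b)
  simpa using this

lemma zsum (g : ZMod 4 → ℕ) : ∑ x : ZMod 4, g x = g 0 + g 1 + g 2 + g 3 := by
  exact Fin.sum_univ_four g

lemma card_split (s : Finset F) (P Q : F → Prop) [DecidablePred P] [DecidablePred Q] :
    (s.filter fun w => P w).card
      = (s.filter fun w => P w ∧ Q w).card + (s.filter fun w => P w ∧ ¬ Q w).card := by
  have h := Finset.card_filter_add_card_filter_not (s := s.filter P) (p := Q)
  rw [Finset.filter_filter, Finset.filter_filter] at h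
  exact h.symm

lemma row (h : Good L f) (a : ZMod 4) :
    nn L a 0 + nn L a 1 + nn L a 2 + nn L a 3 + (if a = 0 then 1 else 0) = f := by
  classical
  have h1 : (Finset.univ.filter fun w : F => (w ≠ 0 ∧ L w = a) ∧ 1 + w ≠ 0).card
      = ∑ s : ZMod 4, nn L a s := by
    rw [Finset.card_eq_sum_card_fiberwise
      (f := fun w => L (1 + w)) (t := Finset.univ) (fun x _ => Finset.mem_univ _)]
    apply Finset.sum_congr rfl
    intro s _
    unfold nn
    congr 1
    ext w
    simp only [Finset.mem_filter, Finset.mem_univ, true_and]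
    tauto
  have h2 : (Finset.univ.filter fun w : F => (w ≠ 0 ∧ L w = a) ∧ ¬ (1 + w ≠ 0)).card
      = (if a = 0 then 1 else 0) := by
    split_ifs with ha
    · subst ha
      rw [show (Finset.univ.filter fun w : F => (w ≠ 0 ∧ L w = 0) ∧ ¬ (1 + w ≠ 0)) = {-1} from ?_]
      · simp
      ext w
      simp only [Finset.mem_filter, Finset.mem_univ, true_and, not_not, Finset.mem_singleton]
      constructor
      · rintro ⟨_, hw⟩
        linear_combination hw
      · rintro rfl
        exact ⟨⟨by simp, h.neg1⟩, by ring⟩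
    · rw [Finset.card_eq_zero.mpr]
      ext w
      simp only [Finset.mem_filter, Finset.mem_univ, true_and, not_not, Finset.notMem_empty,
        iff_false, not_and]
      rintro ⟨hw0, hwa⟩ hw1
      have : w = -1 := by linear_combination hw1
      subst this
      exact ha (hwa.symm.trans h.neg1)
  have h3 : f = (Finset.univ.filter fun w : F => (w ≠ 0 ∧ L w = a) ∧ (1 + w ≠ 0)).card
      + (Finset.univ.filter fun w : F => (w ≠ 0 ∧ L w = a) ∧ ¬ (1 + w ≠ 0)).card := by
    rw [← h.card a]
    exact card_split Finset.univ (fun w => w ≠ 0 ∧ L w = a) (fun w => 1 + w ≠ 0)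
  rw [zsum (nn L a)] at h1
  omega


lemma col (h : Good L f) (b : ZMod 4) :
    nn L 0 b + nn L 1 b + nn L 2 b + nn L 3 b + (if b = 0 then 1 else 0) = f := by
  classical
  have h1 : (Finset.univ.filter fun w : F => w ≠ 0 ∧ (1 + w ≠ 0 ∧ L (1 + w) = b)).card
      = ∑ r : ZMod 4, nn L r b := by
    rw [Finset.card_eq_sum_card_fiberwise
      (f := fun w => L w) (t := Finset.univ) (fun x _ => Finset.mem_univ _)]
    apply Finset.sum_congr rfl
    intro r _
    unfold nn
    congr 1
    ext w
    simp only [Finset.mem_filter, Finset.mem_univ, true_and]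
    tauto
  have h4 : (Finset.univ.filter fun w : F => w ≠ 0 ∧ (1 + w ≠ 0 ∧ L (1 + w) = b)).card
      = (Finset.univ.filter fun y : F => (y ≠ 0 ∧ L y = b) ∧ y ≠ 1).card := by
    refine Finset.card_bij' (fun w _ => 1 + w) (fun y _ => y - 1) ?_ ?_ ?_ ?_
    · intro w hw
      simp only [Finset.mem_filter, Finset.mem_univ, true_and] at hw ⊢
      obtain ⟨hw0, hw10, hwb⟩ := hw
      refine ⟨⟨hw10, hwb⟩, ?_⟩
      intro hh
      exact hw0 (by linear_combination hh)
    · intro y hy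
      simp only [Finset.mem_filter, Finset.mem_univ, true_and] at hy ⊢
      obtain ⟨⟨hy0, hyb⟩, hy1⟩ := hy
      refine ⟨sub_ne_zero.mpr hy1, ?_, ?_⟩
      · rw [show (1 : F) + (y - 1) = y by ring]; exact hy0
      · rw [show (1 : F) + (y - 1) = y by ring]; exact hyb
    · intro w _; ring
    · intro y _; ring
  have h2 : (Finset.univ.filter fun y : F => (y ≠ 0 ∧ L y = b) ∧ ¬ (y ≠ 1)).card
      = (if b = 0 then 1 else 0) := by
    split_ifs with hb
    · subst hb
      rw [show (Finset.univ.filter fun y : F => (y ≠ 0 ∧ L y = 0) ∧ ¬ (y ≠ 1)) = {1} from ?_]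
      · simp
      ext y
      simp only [Finset.mem_filter, Finset.mem_univ, true_and, not_not, Finset.mem_singleton]
      constructor
      · rintro ⟨_, hy⟩; exact hy
      · rintro rfl; exact ⟨⟨one_ne_zero, h.one⟩, rfl⟩
    · rw [Finset.card_eq_zero.mpr]
      ext y
      simp only [Finset.mem_filter, Finset.mem_univ, true_and, not_not, Finset.notMem_empty,
        iff_false, not_and]
      rintro ⟨hy0, hyb⟩ hy1
      subst hy1
      exact hb (hyb.symm.trans h.one)
  have h3 : f = (Finset.univ.filter fun y : F => (y ≠ 0 ∧ L y = b) ∧ (y ≠ 1)).card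
      + (Finset.univ.filter fun y : F => (y ≠ 0 ∧ L y = b) ∧ ¬ (y ≠ 1)).card := by
    rw [← h.card b]
    exact card_split Finset.univ (fun y => y ≠ 0 ∧ L y = b) (fun y => y ≠ 1)
  rw [zsum (fun r => nn L r b)] at h1
  omega

lemma blocks (h : Good L f) :
    (nn L 0 0 + nn L 0 1 + nn L 1 0 + nn L 1 1) + 1 = f ∧
    (nn L 3 3 + nn L 3 0 + nn L 0 3 + nn L 0 0) + 1 = f ∧
    (nn L 1 1 + nn L 1 2 + nn L 2 1 + nn L 2 2) = f ∧
    (nn L 2 2 + nn L 2 3 + nn L 3 2 + nn L 3 3) = f := by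
  have e10 : nn L 1 0 = nn L 0 1 := nn_symm h 1 0
  have e33 : nn L 3 3 = nn L 0 1 := by
    have h5 := nn_inv h 3 3
    rw [show (-3 : ZMod 4) = 1 by decide, show ((3 : ZMod 4) - 3) = 0 by decide] at h5
    rw [h5, e10]
  have e03 : nn L 0 3 = nn L 0 1 := by
    have h5 := nn_frob h 0 3
    rw [show (-0 : ZMod 4) = 0 by decide, show (-3 : ZMod 4) = 1 by decide] at h5
    exact h5
  have e30 : nn L 3 0 = nn L 0 1 := (nn_symm h 3 0).trans e03
  have e11 : nn L 1 1 = nn L 0 1 := by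
    have h5 := nn_inv h 1 1
    rw [show (-1 : ZMod 4) = 3 by decide, show ((1 : ZMod 4) - 1) = 0 by decide] at h5
    rw [h5, e30]
  have e21 : nn L 2 1 = nn L 1 2 := nn_symm h 2 1
  have e23 : nn L 2 3 = nn L 1 2 := by
    have h5 := nn_inv h 2 3
    rw [show (-2 : ZMod 4) = 2 by decide, show ((3 : ZMod 4) - 2) = 1 by decide] at h5
    rw [h5, e21]
  have e32 : nn L 3 2 = nn L 1 2 := (nn_symm h 3 2).trans e23
  have e13 : nn L 1 3 = nn L 1 2 := by
    have h5 := nn_inv h 1 3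
    rw [show (-1 : ZMod 4) = 3 by decide, show ((3 : ZMod 4) - 1) = 2 by decide] at h5
    rw [h5, e32]
  have e20 : nn L 2 0 = nn L 0 2 := nn_symm h 2 0
  have e22 : nn L 2 2 = nn L 0 2 := by
    have h5 := nn_inv h 2 2
    rw [show (-2 : ZMod 4) = 2 by decide, show ((2 : ZMod 4) - 2) = 0 by decide] at h5
    rw [h5, e20]
  have r0 := row h 0
  have r1 := row h 1
  have r2 := row h 2
  rw [if_pos rfl] at r0
  rw [if_neg (by decide : (1 : ZMod 4) ≠ 0), add_zero] at r1
  rw [if_neg (by decide : (2 : ZMod 4) ≠ 0), add_zero] at r2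
  rw [e03] at r0
  rw [e10, e11, e13] at r1
  rw [e20, e21, e22, e23] at r2
  refine ⟨?_, ?_, ?_, ?_⟩
  · rw [e10, e11]; omega
  · rw [e33, e30, e03]; omega
  · rw [e11, e21, e22]; omega
  · rw [e22, e23, e32, e33]; omega

def nf (L : F → ZMod 4) (r s : ZMod 4) : Finset F :=
  Finset.univ.filter fun w : F => (w ≠ 0 ∧ L w = r) ∧ (1 + w ≠ 0 ∧ L (1 + w) = s)

lemma nn_eq_nf (L : F → ZMod 4) (r s : ZMod 4) : nn L r s = (nf L r s).card := rfl

lemma nf_disj (L : F → ZMod 4) (r s r' s' : ZMod 4) (hne : r ≠ r' ∨ s ≠ s') :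
    Disjoint (nf L r s) (nf L r' s') := by
  rw [Finset.disjoint_left]
  intro w hw hw'
  simp only [nf, Finset.mem_filter, Finset.mem_univ, true_and] at hw hw'
  rcases hne with hne | hne
  · exact hne (hw.1.2.symm.trans hw'.1.2)
  · exact hne (hw.2.2.symm.trans hw'.2.2)

lemma count_filter (L : F → ZMod 4) (d : ZMod 4) :
    (Finset.univ.filter fun w : F =>
        (w ≠ 0 ∧ (L w = d ∨ L w = d + 1)) ∧
        (1 + w ≠ 0 ∧ (L (1 + w) = d ∨ L (1 + w) = d + 1))).card
      = nn L d d + nn L d (d+1) + nn L (d+1) d + nn L (d+1) (d+1) := by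
  classical
  have hd : ∀ e : ZMod 4, e ≠ e + 1 := by decide
  have hun : (Finset.univ.filter fun w : F =>
        (w ≠ 0 ∧ (L w = d ∨ L w = d + 1)) ∧
        (1 + w ≠ 0 ∧ (L (1 + w) = d ∨ L (1 + w) = d + 1)))
      = nf L d d ∪ nf L d (d+1) ∪ nf L (d+1) d ∪ nf L (d+1) (d+1) := by
    ext w
    simp only [nf, Finset.mem_union, Finset.mem_filter, Finset.mem_univ, true_and]
    tauto
  have hA : Disjoint (nf L d d) (nf L d (d+1)) := nf_disj L _ _ _ _ (Or.inr (hd d))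
  have hB : Disjoint (nf L d d ∪ nf L d (d+1)) (nf L (d+1) d) :=
    Finset.disjoint_union_left.mpr ⟨nf_disj L _ _ _ _ (Or.inl (hd d)),
      nf_disj L _ _ _ _ (Or.inl (hd d))⟩
  have hC : Disjoint (nf L d d ∪ nf L d (d+1) ∪ nf L (d+1) d) (nf L (d+1) (d+1)) :=
    Finset.disjoint_union_left.mpr ⟨Finset.disjoint_union_left.mpr
      ⟨nf_disj L _ _ _ _ (Or.inl (hd d)), nf_disj L _ _ _ _ (Or.inl (hd d))⟩,
      nf_disj L _ _ _ _ (Or.inr (hd d))⟩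
  rw [hun, Finset.card_union_of_disjoint hC, Finset.card_union_of_disjoint hB,
    Finset.card_union_of_disjoint hA, nn_eq_nf, nn_eq_nf, nn_eq_nf, nn_eq_nf]

lemma blk (h : Good L f) (d : ZMod 4) :
    (nn L d d + nn L d (d+1) + nn L (d+1) d + nn L (d+1) (d+1))
      = if d = 0 ∨ d = 3 then f - 1 else f := by
  obtain ⟨b0, b3, b1, b2⟩ := blocks h
  have hd : ∀ e : ZMod 4, e = 0 ∨ e = 1 ∨ e = 2 ∨ e = 3 := by decide
  rcases hd d with rfl | rfl | rfl | rfl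
  · rw [if_pos (Or.inl rfl)]
    rw [show ((0 : ZMod 4) + 1) = 1 by decide]
    omega
  · rw [if_neg (by decide)]
    rw [show ((1 : ZMod 4) + 1) = 2 by decide]
    omega
  · rw [if_neg (by decide)]
    rw [show ((2 : ZMod 4) + 1) = 3 by decide]
    omega
  · rw [if_pos (Or.inr rfl)]
    rw [show ((3 : ZMod 4) + 1) = 0 by decide]
    omega

end PDS


theorem stmt_2 (q : ℕ) (hq : IsPrimePow q) (h4 : q % 4 = 3)
    (F : Type*) [Field F] [Fintype F] (hF : Fintype.card F = q ^ 2)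
    (ω : F) (hω : ∀ x : F, x ≠ 0 → ∃ k : ℕ, x = ω ^ k) :
    ∀ i : Fin 4,
      (cyc ω 4 (i : ℕ) ∪ cyc ω 4 ((i : ℕ) + 1)).ncard = (q ^ 2 - 1) / 2 ∧
      ∀ x : F, x ≠ 0 →
        (x ∈ cyc ω 4 (i : ℕ) ∪ cyc ω 4 ((i : ℕ) + 1) →
          diffCount (cyc ω 4 (i : ℕ) ∪ cyc ω 4 ((i : ℕ) + 1))
            (cyc ω 4 (i : ℕ) ∪ cyc ω 4 ((i : ℕ) + 1)) x = (q ^ 2 - 5) / 4) ∧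
        (x ∉ cyc ω 4 (i : ℕ) ∪ cyc ω 4 ((i : ℕ) + 1) →
          diffCount (cyc ω 4 (i : ℕ) ∪ cyc ω 4 ((i : ℕ) + 1))
            (cyc ω 4 (i : ℕ) ∪ cyc ω 4 ((i : ℕ) + 1)) x = (q ^ 2 - 1) / 4) := by
  classical
  obtain ⟨t, ht⟩ : ∃ t, q = 4 * t + 3 := ⟨q / 4, by omega⟩
  have key8 : ∀ a b : ℕ, a = 16 * b + 24 * t + 9 → 8 ∣ a - 1 := by intro a b hab; omega
  have hq9 : 9 ≤ q ^ 2 := by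
    calc (9:ℕ) = 3 ^ 2 := rfl
    _ ≤ q ^ 2 := Nat.pow_le_pow_left (by omega) 2
  obtain ⟨Q, hQ⟩ : ∃ Q, Q = q ^ 2 := ⟨_, rfl⟩
  rw [← hQ] at hF hq9 ⊢
  have h8' : 8 ∣ Q - 1 := by rw [hQ]; exact key8 _ (t * t) (by rw [ht]; ring)
  set N := Q - 1 with hN
  have h8 : 8 ∣ N := h8'
  have hN4 : (4:ℕ) ∣ N := dvd_trans (by norm_num) h8
  -- ω is nonzero
  have hω0 : ω ≠ 0 := by
    intro h0
    have h2 : (Finset.univ : Finset F) ⊆ {0, 1} := by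
      intro x _
      rcases eq_or_ne x 0 with rfl | hx
      · simp
      · obtain ⟨k, hk⟩ := hω x hx
        rcases Nat.eq_zero_or_pos k with rfl | hkpos
        · simp only [pow_zero] at hk
          simp [hk]
        · rw [h0, zero_pow (by omega)] at hk
          exact absurd hk hx
    have hle := Finset.card_le_card h2
    have hc2 : ({0, 1} : Finset F).card ≤ 2 :=
      (Finset.card_insert_le _ _).trans (by simp)
    rw [Finset.card_univ, hF] at hle
    omega
  set u : Fˣ := Units.mk0 ω hω0 with hu
  have huval : ∀ m : ℤ, ((u ^ m : Fˣ) : F) = ω ^ m := fun m => Units.val_zpow_eq_zpow_val u m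
  have hcardu : Fintype.card Fˣ = N := by rw [Fintype.card_units, hF]
  have hmem : ∀ y : Fˣ, y ∈ Subgroup.zpowers u := by
    intro y
    obtain ⟨k, hk⟩ := hω y y.ne_zero
    exact Subgroup.mem_zpowers_iff.mpr ⟨(k : ℤ),
      Units.ext (by rw [huval, zpow_natCast]; exact hk.symm)⟩
  have horder : orderOf u = N := by
    rw [orderOf_eq_card_of_forall_mem_zpowers hmem, Nat.card_eq_fintype_card, hcardu]
  have hinj : ∀ a b : ℤ, ω ^ a = ω ^ b → (4 : ℤ) ∣ a - b := by
    intro a b hab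
    have h1 : u ^ (a - b) = 1 := by
      have h2 : u ^ a = u ^ b := Units.ext (by rw [huval, huval]; exact hab)
      rw [zpow_sub, h2]
      simp
    have h2 : (N : ℤ) ∣ a - b := by
      rw [← horder]
      exact orderOf_dvd_iff_zpow_eq_one.mpr h1
    exact dvd_trans (by exact_mod_cast Int.natCast_dvd_natCast.mpr hN4) h2
  have hrep : ∀ x : F, x ≠ 0 → ∃ m : ℤ, x = ω ^ m := by
    intro x hx
    obtain ⟨k, hk⟩ := hω x hx
    exact ⟨(k : ℤ), by rw [zpow_natCast]; exact hk⟩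
  obtain ⟨L, hwd⟩ : ∃ L : F → ZMod 4, ∀ m : ℤ, L (ω ^ m) = (m : ZMod 4) := by
    refine ⟨fun x => if h : x ≠ 0 then ((Classical.choose (hrep x h) : ℤ) : ZMod 4) else 0, ?_⟩
    intro m
    have hx : ω ^ m ≠ 0 := zpow_ne_zero _ hω0
    beta_reduce
    rw [dif_pos hx]
    have hs := Classical.choose_spec (hrep (ω ^ m) hx)
    have hdvd := hinj _ _ hs
    exact (ZMod.intCast_eq_intCast_iff_dvd_sub _ m 4).mpr (by exact_mod_cast hdvd)
  have hL : ∀ x : F, x ≠ 0 → ∃ m : ℤ, x = ω ^ m ∧ L x = (m : ZMod 4) := by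
    intro x hx
    obtain ⟨m, hm⟩ := hrep x hx
    exact ⟨m, hm, by rw [hm, hwd]⟩
  have hLmul : ∀ x y : F, x ≠ 0 → y ≠ 0 → L (x * y) = L x + L y := by
    intro x y hx hy
    obtain ⟨a, ha, hLa⟩ := hL x hx
    obtain ⟨b, hb, hLb⟩ := hL y hy
    rw [ha, hb, ← zpow_add₀ hω0, hwd, hwd, hwd]
    push_cast
    ring
  have hLinv : ∀ x : F, x ≠ 0 → L x⁻¹ = - L x := by
    intro x hx
    obtain ⟨a, ha, hLa⟩ := hL x hx
    rw [ha, ← zpow_neg, hwd, hwd]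
    push_cast
    ring
  have hLone : L 1 = 0 := by
    have h1 := hwd 0
    rw [zpow_zero] at h1
    simpa using h1
  have hLneg1 : L (-1) = 0 := by
    have hM4 : (4:ℕ) ∣ N / 2 := by omega
    have hMpos : 0 < N / 2 := by omega
    have hpow2 : (ω ^ (N / 2)) * (ω ^ (N / 2)) = 1 := by
      rw [← pow_add, show N / 2 + N / 2 = N by omega]
      have h1 : u ^ N = 1 := by rw [← horder]; exact pow_orderOf_eq_one u
      have h2 := congrArg Units.val h1
      simpa [hu] using h2
    have hne1 : (ω : F) ^ (N / 2) ≠ 1 := by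
      intro hh
      have h1 : u ^ (N / 2) = 1 := Units.ext (by simpa [hu] using hh)
      have hdvd : orderOf u ∣ N / 2 := orderOf_dvd_of_pow_eq_one h1
      rw [horder] at hdvd
      exact absurd (Nat.le_of_dvd hMpos hdvd) (by omega)
    have hNeg1 : (-1 : F) = ω ^ (N / 2) := by
      rcases mul_self_eq_one_iff.mp hpow2 with hh | hh
      · exact absurd hh hne1
      · exact hh.symm
    rw [hNeg1, ← zpow_natCast, hwd, Int.cast_natCast]
    exact (ZMod.natCast_eq_zero_iff _ _).mpr hM4
  have hLω : L ω = 1 := by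
    have h1 := hwd 1
    rw [zpow_one] at h1
    simpa using h1
  -- class sizes
  have hstep : ∀ j : ZMod 4,
      (Finset.univ.filter fun x : F => x ≠ 0 ∧ L x = j).card
        = (Finset.univ.filter fun x : F => x ≠ 0 ∧ L x = j + 1).card := by
    intro j
    refine Finset.card_bij' (fun x _ => ω * x) (fun y _ => ω⁻¹ * y) ?_ ?_ ?_ ?_
    · intro x hx
      simp only [Finset.mem_filter, Finset.mem_univ, true_and] at hx ⊢
      obtain ⟨hx0, hxj⟩ := hx
      exact ⟨mul_ne_zero hω0 hx0, by rw [hLmul _ _ hω0 hx0, hLω, hxj]; ring⟩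
    · intro y hy
      simp only [Finset.mem_filter, Finset.mem_univ, true_and] at hy ⊢
      obtain ⟨hy0, hyj⟩ := hy
      have hωi : ω⁻¹ ≠ 0 := inv_ne_zero hω0
      refine ⟨mul_ne_zero hωi hy0, ?_⟩
      rw [hLmul _ _ hωi hy0, hLinv _ hω0, hLω, hyj]
      ring
    · intro x _; exact inv_mul_cancel_left₀ hω0 x
    · intro y _; exact mul_inv_cancel_left₀ hω0 y
  set f := (Finset.univ.filter fun x : F => x ≠ 0 ∧ L x = (0 : ZMod 4)).card with hf
  have hcards : ∀ j : ZMod 4,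
      (Finset.univ.filter fun x : F => x ≠ 0 ∧ L x = j).card = f := by
    have h01 := hstep 0
    have h12 := hstep 1
    have h23 := hstep 2
    rw [show ((0:ZMod 4)+1) = 1 by decide] at h01
    rw [show ((1:ZMod 4)+1) = 2 by decide] at h12
    rw [show ((2:ZMod 4)+1) = 3 by decide] at h23
    intro j
    have hj : ∀ e : ZMod 4, e = 0 ∨ e = 1 ∨ e = 2 ∨ e = 3 := by decide
    rcases hj j with rfl | rfl | rfl | rfl
    · rfl
    · omega
    · omega
    · omega
  have hpart : (Finset.univ.filter fun x : F => x ≠ 0).card = N := by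
    rw [Finset.filter_ne' Finset.univ 0, Finset.card_erase_of_mem (Finset.mem_univ 0),
      Finset.card_univ, hF]
  have hNf : N = 4 * f := by
    have hfib : (Finset.univ.filter fun x : F => x ≠ 0).card
        = ∑ j : ZMod 4, (Finset.univ.filter fun x : F => x ≠ 0 ∧ L x = j).card := by
      rw [Finset.card_eq_sum_card_fiberwise
        (f := fun x => L x) (t := Finset.univ) (fun x _ => Finset.mem_univ _)]
      apply Finset.sum_congr rfl
      intro j _
      rw [Finset.filter_filter]
    rw [hpart, PDS.zsum (fun j => (Finset.univ.filter fun x : F => x ≠ 0 ∧ L x = j).card)]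
      at hfib
    rw [hcards 0, hcards 1, hcards 2, hcards 3] at hfib
    omega
  -- Frobenius
  obtain ⟨p, e, hp, hepos, hpe⟩ := hq
  have hpnat : p.Prime := hp.nat_prime
  haveI := ringChar.charP F
  obtain ⟨n, hrprime, hcard_char⟩ := FiniteField.card F (ringChar F)
  have hrp : ringChar F = p := by
    have h1 : ringChar F ∣ p ^ (2 * e) := by
      have h2 : Fintype.card F = p ^ (2 * e) := by rw [hF, hQ, ← hpe]; ring
      rw [h2] at hcard_char
      exact hcard_char ▸ dvd_pow_self (ringChar F) (by
        exact_mod_cast n.ne_zero)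
    exact (Nat.prime_dvd_prime_iff_eq hrprime hpnat).mp (hrprime.dvd_of_dvd_pow h1)
  haveI : Fact (Nat.Prime p) := ⟨hpnat⟩
  haveI hcharp : CharP F p := hrp ▸ ringChar.charP F
  have hfrobmap : ∃ σ : F →+* F, ∀ x : F, σ x = x ^ q := by
    refine ⟨{ toFun := fun x => x ^ q, map_one' := one_pow q,
              map_mul' := fun x y => mul_pow x y q,
              map_zero' := zero_pow (by omega), map_add' := ?_ }, fun x => rfl⟩
    intro x y
    show (x + y) ^ q = x ^ q + y ^ q
    rw [← hpe]
    exact add_pow_char_pow x y p e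
  obtain ⟨σ, hσdef⟩ := hfrobmap
  have hq3 : ((q : ℕ) : ZMod 4) = 3 := by
    have h1 : ((q : ℕ) : ZMod 4) = ((q % 4 : ℕ) : ZMod 4) := (ZMod.natCast_mod q 4).symm
    rw [h1, h4]
    decide
  have hLfrob : ∀ x : F, x ≠ 0 → L (σ x) = - L x := by
    intro x hx
    obtain ⟨m, hm, hLm⟩ := hL x hx
    rw [hm, hσdef, ← zpow_natCast (ω ^ m) q, ← zpow_mul, hwd, hwd]
    push_cast
    rw [hq3]
    rw [show (3 : ZMod 4) = -1 by decide]
    ring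
  have hGood : PDS.Good L f :=
    { mul := hLmul, inv := hLinv, one := hLone, neg1 := hLneg1,
      card := hcards, frob := ⟨σ, hLfrob⟩ }
  -- per-class membership description of cyc
  have hmemcyc : ∀ (z : ℤ) (x : F), x ∈ cyc ω 4 z ↔ (x ≠ 0 ∧ L x = (z : ZMod 4)) := by
    intro z x
    constructor
    · rintro ⟨k, rfl⟩
      refine ⟨zpow_ne_zero _ hω0, ?_⟩
      rw [hwd]
      push_cast
      rw [show (4 : ZMod 4) = 0 by decide]
      ring
    · rintro ⟨hx, hLx⟩
      obtain ⟨m, hm, hLm⟩ := hL x hx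
      rw [hLm] at hLx
      have hdvd : (4:ℤ) ∣ z - m := by
        have h1 := (ZMod.intCast_eq_intCast_iff_dvd_sub m z 4).mp hLx
        exact_mod_cast h1
      obtain ⟨c, hc⟩ := hdvd
      refine ⟨-c, ?_⟩
      rw [hm]
      congr 1
      push_cast
      omega
  intro i
  set i' : ZMod 4 := ((i : ℕ) : ZMod 4) with hi'
  set Df : Finset F := (Finset.univ.filter fun x : F => x ≠ 0 ∧ L x = i')
      ∪ (Finset.univ.filter fun x : F => x ≠ 0 ∧ L x = i' + 1) with hDf
  have hmemD : ∀ x : F, x ∈ Df ↔ (x ≠ 0 ∧ (L x = i' ∨ L x = i' + 1)) := by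
    intro x
    rw [hDf]
    simp only [Finset.mem_union, Finset.mem_filter, Finset.mem_univ, true_and]
    tauto
  have hDset : cyc ω 4 ((i:ℕ)) ∪ cyc ω 4 (((i:ℕ)) + 1) = (↑Df : Set F) := by
    ext x
    rw [Set.mem_union, hmemcyc, hmemcyc, Finset.mem_coe, hmemD]
    constructor
    · rintro (⟨hx, hLx⟩ | ⟨hx, hLx⟩)
      · exact ⟨hx, Or.inl (by rw [hLx, hi']; push_cast; ring)⟩
      · exact ⟨hx, Or.inr (by rw [hLx, hi']; push_cast; ring)⟩
    · rintro ⟨hx, (hLx | hLx)⟩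
      · exact Or.inl ⟨hx, by rw [hLx, hi']; push_cast; ring⟩
      · exact Or.inr ⟨hx, by rw [hLx, hi']; push_cast; ring⟩
  have hne01 : ∀ e : ZMod 4, e ≠ e + 1 := by decide
  constructor
  · rw [hDset, Set.ncard_coe_finset, hDf, Finset.card_union_of_disjoint, hcards, hcards]
    · omega
    · rw [Finset.disjoint_left]
      intro a ha hb
      simp only [Finset.mem_filter, Finset.mem_univ, true_and] at ha hb
      exact hne01 i' (ha.2.symm.trans hb.2)
  intro x hx
  rw [hDset]
  set j := L x with hj
  set d : ZMod 4 := i' - j with hd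
  have harr : ∀ v : F, (1:F) + x⁻¹ * v = x⁻¹ * (v + x) := by
    intro v
    rw [mul_add, inv_mul_cancel₀ hx, add_comm]
  have hcount : diffCount (↑Df) (↑Df) x
      = PDS.nn L d d + PDS.nn L d (d+1) + PDS.nn L (d+1) d + PDS.nn L (d+1) (d+1) := by
    rw [← PDS.count_filter L d]
    unfold diffCount
    have hinj2 : Function.Injective (fun v : F => (v + x, v)) := by
      intro a b hab
      simpa using congrArg Prod.snd hab
    have h1 : {p : F × F | p.1 ∈ (↑Df : Set F) ∧ p.2 ∈ (↑Df : Set F) ∧ p.1 - p.2 = x}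
        = (fun v : F => (v + x, v)) '' {v : F | v ∈ Df ∧ v + x ∈ Df} := by
      ext ⟨a, b⟩
      simp only [Set.mem_setOf_eq, Set.mem_image, Finset.mem_coe, Prod.mk.injEq]
      constructor
      · rintro ⟨ha, hb, hab⟩
        refine ⟨b, ⟨hb, ?_⟩, by linear_combination -hab, rfl⟩
        rw [show b + x = a from by linear_combination -hab]
        exact ha
      · rintro ⟨v, ⟨hv, hvx⟩, hva, rfl⟩
        rw [← hva]
        exact ⟨hvx, hv, by ring⟩
    rw [h1, Set.ncard_image_of_injective _ hinj2]
    have h2 : {v : F | v ∈ Df ∧ v + x ∈ Df} = ↑(Df.filter fun v => v + x ∈ Df) := by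
      ext v
      simp [Finset.mem_filter]
    rw [h2, Set.ncard_coe_finset]
    refine Finset.card_bij' (fun v _ => x⁻¹ * v) (fun w _ => x * w) ?_ ?_ ?_ ?_
    · intro v hv
      rw [Finset.mem_filter, hmemD, hmemD] at hv
      obtain ⟨⟨hv0, hvL⟩, hvx0, hvxL⟩ := hv
      simp only [Finset.mem_filter, Finset.mem_univ, true_and]
      have hxi : x⁻¹ ≠ 0 := inv_ne_zero hx
      refine ⟨⟨mul_ne_zero hxi hv0, ?_⟩, ?_, ?_⟩
      · rw [hLmul _ _ hxi hv0, hLinv _ hx]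
        rcases hvL with h | h
        · left; rw [h, ← hj, hd]; ring
        · right; rw [h, ← hj, hd]; ring
      · rw [harr v]
        exact mul_ne_zero hxi hvx0
      · rw [harr v, hLmul _ _ hxi hvx0, hLinv _ hx]
        rcases hvxL with h | h
        · left; rw [h, ← hj, hd]; ring
        · right; rw [h, ← hj, hd]; ring
    · intro w hw
      simp only [Finset.mem_filter, Finset.mem_univ, true_and] at hw
      obtain ⟨⟨hw0, hwL⟩, hw10, hwL1⟩ := hw
      rw [Finset.mem_filter, hmemD, hmemD]
      refine ⟨⟨mul_ne_zero hx hw0, ?_⟩, ?_, ?_⟩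
      · rw [hLmul _ _ hx hw0]
        rcases hwL with h | h
        · left; rw [h, ← hj, hd]; ring
        · right; rw [h, ← hj, hd]; ring
      · rw [show x * w + x = x * (1 + w) from by ring]
        exact mul_ne_zero hx hw10
      · rw [show x * w + x = x * (1 + w) from by ring, hLmul _ _ hx hw10]
        rcases hwL1 with h | h
        · left; rw [h, ← hj, hd]; ring
        · right; rw [h, ← hj, hd]; ring
    · intro v _; exact mul_inv_cancel_left₀ hx v
    · intro w _; exact inv_mul_cancel_left₀ hx w
  have hblk := PDS.blk hGood d
  have hxmem : x ∈ (↑Df : Set F) ↔ (j = i' ∨ j = i' + 1) := by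
    rw [Finset.mem_coe, hmemD, ← hj]
    constructor
    · exact fun hh => hh.2
    · exact fun hh => ⟨hx, hh⟩
  constructor
  · intro hxD
    rcases hxmem.mp hxD with h | h
    · have hd0 : d = 0 := by rw [hd, h]; ring
      rw [hd0] at hblk hcount
      rw [if_pos (Or.inl rfl)] at hblk
      rw [hcount]
      omega
    · have hd3 : d = 3 := by
        rw [hd, h]
        exact (by decide : ∀ e : ZMod 4, e - (e + 1) = 3) i'
      rw [hd3] at hblk hcount
      rw [if_pos (Or.inr rfl)] at hblk
      rw [hcount]
      omega
  · intro hxD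
    have hj' : ¬(j = i' ∨ j = i' + 1) := fun hh => hxD (hxmem.mpr hh)
    have hcases : ∀ a b : ZMod 4, ¬(a = b ∨ a = b + 1) → (b - a = 1 ∨ b - a = 2) := by decide
    rcases hcases j i' hj' with h | h
    · have hd1 : d = 1 := by rw [hd]; exact h
      rw [hd1] at hblk hcount
      rw [if_neg (by decide)] at hblk
      rw [hcount]
      omega
    · have hd2 : d = 2 := by rw [hd]; exact h
      rw [hd2] at hblk hcount
      rw [if_neg (by decide)] at hblk
      rw [hcount]
      omega
end

section
/- Let q be a prime power with q ≡ 3 (mod 4), let F be a finite field with q² elements, fix a primitive element ω of F, and let D₀ = C₀⁽⁴⁾ ∪ C₁⁽⁴⁾ and D₂ = C₂⁽⁴⁾ ∪ C₃⁽⁴⁾. Suppose E₀, E₁, E₂, E₃ ⊆ F each have size (q² − q)/2 and satisfy: (i) for every nonzero x ∈ F, Σᵢ₌₀³ N(Eᵢ,Eᵢ;x) = q² − 2q (a difference family of type H); and (ii) for every x ∈ F, N(E₀,E₁;x) + N(E₁,E₀;x) + N(E₂,E₃;x) + N(E₃,E₂;x) = (q−1)² + 2·[x ∈ D₀] − 2·[x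 ∈ D₂]. In G = ℤ/2ℤ × F, set B₀ = ({0} × D₀) ∪ ({1} × (F ∖ D₀)), B₁ = ({0} × D₂) ∪ ({1} × D₂), B₂ = ({0} × E₀) ∪ ({1} × (F ∖ E₁)), and B₃ = ({0} × E₂) ∪ ({1} × (F ∖ E₃)). Then {B₀, B₁, B₂, B₃} is a difference family with parameters (2q²; q², q²−1, q², q²; 2q²−2) in G, i.e., |B₀| = |B₂| = |B₃| = q², |B₁| = q² − 1, and for every nonzero g ∈ G, Σᵢ₌₀³ N(Bᵢ,Bᵢ;g) = 2q² − 2. -/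
open Classical in
/-- Indicator of a proposition, valued in `ℤ`. -/
noncomputable def ind (P : Prop) : ℤ := if P then 1 else 0

lemma ind_of {P : Prop} (h : P) : ind P = 1 := by simp [ind, h]
lemma ind_of_not {P : Prop} (h : ¬P) : ind P = 0 := by simp [ind, h]
lemma ind_congr {P Q : Prop} (h : P ↔ Q) : ind P = ind Q := by rw [ind, ind, propext h]
lemma ind_and (P Q : Prop) : ind (P ∧ Q) = ind P * ind Q := by
  by_cases hP : P <;> by_cases hQ : Q <;> simp [ind, hP, hQ]

lemma sum_ind_eq_card {V : Type*} [Fintype V] (P : V → Prop) [DecidablePred P] :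
    ∑ v : V, ind (P v) = ((Finset.univ.filter P).card : ℤ) := by
  rw [← Finset.sum_boole]
  exact Finset.sum_congr rfl fun v _ => by by_cases h : P v <;> simp [ind, h]

lemma ncard_eq_sum_ind {V : Type*} [Fintype V] (A : Set V) :
    (A.ncard : ℤ) = ∑ v : V, ind (v ∈ A) := by
  classical
  rw [sum_ind_eq_card, ← Nat.card_coe_set_eq, Nat.card_eq_fintype_card,
    Fintype.card_subtype]

lemma diffCount_eq_sum {V : Type*} [AddCommGroup V] [Fintype V] (A B : Set V) (g : V) :
    (diffCount A B g : ℤ) = ∑ v : V, ind (v + g ∈ A) * ind (v ∈ B) := by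
  classical
  have e : {p : V × V | p.1 ∈ A ∧ p.2 ∈ B ∧ p.1 - p.2 = g} ≃ {v : V | v + g ∈ A ∧ v ∈ B} :=
    { toFun := fun p => ⟨p.1.2, by
        obtain ⟨h1, h2, h3⟩ := p.2
        have : p.1.1 = p.1.2 + g := by have := sub_eq_iff_eq_add.mp h3; rw [this]; abel
        exact ⟨this ▸ h1, h2⟩⟩
      invFun := fun v => ⟨(v.1 + g, v.1), ⟨v.2.1, v.2.2, by simp⟩⟩
      left_inv := fun p => by
        apply Subtype.ext
        have h3 := p.2.2.2
        have h : p.1.1 = p.1.2 + g := by have := sub_eq_iff_eq_add.mp h3; rw [this]; abel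
        exact Prod.ext h.symm rfl
      right_inv := fun v => rfl }
  have : (diffCount A B g : ℤ) = ((Finset.univ.filter fun v => v + g ∈ A ∧ v ∈ B).card : ℤ) := by
    unfold diffCount
    rw [← Nat.card_coe_set_eq, Nat.card_congr e, Nat.card_eq_fintype_card,
      Fintype.card_subtype]
    norm_num [Set.mem_setOf_eq]
  rw [this, ← sum_ind_eq_card]
  exact Finset.sum_congr rfl fun v _ => ind_and _ _

lemma sum_translate' {V : Type*} [AddCommGroup V] [Fintype V] (f : V → ℤ) (x : V) :
    ∑ v : V, f (v + x) = ∑ v : V, f v :=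
  Fintype.sum_equiv (Equiv.addRight x) _ _ fun v => rfl

lemma sum_ind_single {V : Type*} [Fintype V] [DecidableEq V] (c : V) (f : V → ℤ) :
    ∑ v : V, ind (v = c) * f v = f c := by
  rw [Finset.sum_eq_single c]
  · simp [ind]
  · intro b _ hb; simp [ind_of_not hb]
  · intro h; exact absurd (Finset.mem_univ c) h


lemma sum_ind_single' {V : Type*} [Fintype V] [DecidableEq V] (c : V) (f : V → ℤ) :
    ∑ v : V, f v * ind (v = c) = f c := by
  rw [Finset.sum_eq_single c]
  · simp [ind]
  · intro b _ hb; simp [ind_of_not hb]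
  · intro h; exact absurd (Finset.mem_univ c) h

lemma sum_card_univ {V : Type*} [Fintype V] :
    ∑ _v : V, (1 : ℤ) = (Fintype.card V : ℤ) := by simp

section Main

variable {q : ℕ} {F : Type*} [Field F] [Fintype F] {ω : F}

structure Setup (q : ℕ) {F : Type*} [Field F] [Fintype F] (ω : F) : Prop where
  h4 : q % 4 = 3
  hcard : Fintype.card F = q ^ 2
  hgen : ∀ x : F, x ≠ 0 → ∃ k : ℕ, x = ω ^ k
  hfrob : ∀ a b : F, (a - b) ^ q = a ^ q - b ^ q

namespace Setup

lemma q3 (S : Setup q ω) : 3 ≤ q := by have := S.h4; omega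

lemma h8 (S : Setup q ω) : 8 ∣ q ^ 2 - 1 := by
  have h : q = 4 * (q / 4) + 3 := by have := S.h4; omega
  set t := q / 4
  have h2 : q ^ 2 = 16 * t ^ 2 + 24 * t + 9 := by rw [h]; ring
  omega

lemma card9 (S : Setup q ω) : 9 ≤ Fintype.card F := by
  rw [S.hcard]
  have := S.q3
  calc 9 = 3 ^ 2 := rfl
  _ ≤ q ^ 2 := Nat.pow_le_pow_left this 2

lemma omega_ne (S : Setup q ω) : ω ≠ 0 := by
  intro h
  have key : ∀ x : F, x = 0 ∨ x = 1 := by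
    intro x
    rcases eq_or_ne x 0 with hx | hx
    · exact Or.inl hx
    · obtain ⟨k, hk⟩ := S.hgen x hx
      rcases Nat.eq_zero_or_pos k with hk0 | hk0
      · right; rw [hk, hk0, pow_zero]
      · exfalso; apply hx; rw [hk, h, zero_pow (by omega)]
  have hsurj : Function.Surjective (fun b : Bool => if b then (1 : F) else 0) := by
    intro x
    rcases key x with h | h
    · exact ⟨false, h.symm⟩
    · exact ⟨true, h.symm⟩
  have := Fintype.card_le_of_surjective _ hsurj
  have h9 := S.card9
  simp [Fintype.card_bool] at this
  omega

/-- The unit corresponding to ω. -/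
noncomputable def u (S : Setup q ω) : Fˣ := Units.mk0 ω S.omega_ne

lemma val_u (S : Setup q ω) : ((S.u : Fˣ) : F) = ω := rfl

lemma ord_u (S : Setup q ω) : orderOf S.u = q ^ 2 - 1 := by
  have : ∀ g : Fˣ, g ∈ Subgroup.zpowers S.u := by
    intro g
    obtain ⟨k, hk⟩ := S.hgen (g : F) (Units.ne_zero g)
    refine Subgroup.mem_zpowers_iff.mpr ⟨(k : ℤ), ?_⟩
    apply Units.ext
    rw [Units.val_zpow_eq_zpow_val, val_u, zpow_natCast, ← hk]
  rw [orderOf_eq_card_of_forall_mem_zpowers this, Nat.card_units, Nat.card_eq_fintype_card,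
    S.hcard]

lemma pow_inj (S : Setup q ω) {a b : ℕ} (h : ω ^ a = ω ^ b) : (a : ZMod 4) = (b : ZMod 4) := by
  have hu : S.u ^ a = S.u ^ b := by
    apply Units.ext
    rw [Units.val_pow_eq_pow_val, Units.val_pow_eq_pow_val, val_u]
    exact h
  have hmod : a ≡ b [MOD q ^ 2 - 1] := by
    rw [← S.ord_u]; exact pow_eq_pow_iff_modEq.mp hu
  have h4 : a ≡ b [MOD 4] := Nat.ModEq.of_dvd (dvd_trans ⟨2, rfl⟩ S.h8) hmod
  exact (ZMod.natCast_eq_natCast_iff a b 4).mpr h4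

end Setup

open Classical in
/-- Discrete log modulo 4. -/
noncomputable def dlog (ω x : F) : ZMod 4 :=
  if h : ∃ k : ℕ, x = ω ^ k then ((h.choose : ℕ) : ZMod 4) else 0

namespace Setup

lemma dlog_pow (S : Setup q ω) (k : ℕ) : dlog ω (ω ^ k) = (k : ZMod 4) := by
  have h : ∃ m : ℕ, ω ^ k = ω ^ m := ⟨k, rfl⟩
  rw [dlog, dif_pos h]
  exact (S.pow_inj h.choose_spec).symm

lemma exists_rep (S : Setup q ω) {x : F} (hx : x ≠ 0) :
    ∃ k : ℕ, x = ω ^ k ∧ dlog ω x = (k : ZMod 4) := by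
  obtain ⟨k, hk⟩ := S.hgen x hx
  exact ⟨k, hk, by rw [hk, S.dlog_pow]⟩

lemma dlog_one (S : Setup q ω) : dlog ω (1 : F) = 0 := by
  have := S.dlog_pow 0
  simpa using this

lemma dlog_omega (S : Setup q ω) : dlog ω ω = 1 := by
  have := S.dlog_pow 1
  simpa using this

lemma dlog_mul (S : Setup q ω) {x y : F} (hx : x ≠ 0) (hy : y ≠ 0) :
    dlog ω (x * y) = dlog ω x + dlog ω y := by
  obtain ⟨a, ha, ha'⟩ := S.exists_rep hx
  obtain ⟨b, hb, hb'⟩ := S.exists_rep hy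
  have : x * y = ω ^ (a + b) := by rw [ha, hb, pow_add]
  rw [this, S.dlog_pow, ha', hb']
  push_cast
  ring

lemma dlog_pow_nat (S : Setup q ω) {x : F} (hx : x ≠ 0) (m : ℕ) :
    dlog ω (x ^ m) = (m : ZMod 4) * dlog ω x := by
  obtain ⟨a, ha, ha'⟩ := S.exists_rep hx
  have : x ^ m = ω ^ (a * m) := by rw [ha, ← pow_mul]
  rw [this, S.dlog_pow, ha']
  push_cast
  ring

lemma dlog_zpow (S : Setup q ω) (m : ℤ) : dlog ω (ω ^ m) = (m : ZMod 4) := by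
  set n : ℕ := q ^ 2 - 1 with hn
  have hq9 : 9 ≤ q ^ 2 := by
    have h3 := S.q3
    calc 9 = 3 ^ 2 := rfl
    _ ≤ q ^ 2 := Nat.pow_le_pow_left h3 2
  have hnpos : 0 < n := by omega
  have h1 : S.u ^ m = S.u ^ (((m % (n : ℤ)).toNat : ℕ) : ℤ) := by
    rw [zpow_eq_zpow_iff_modEq, S.ord_u, ← hn]
    have : ((m % (n : ℤ)).toNat : ℤ) = m % (n : ℤ) := by
      apply Int.toNat_of_nonneg
      exact Int.emod_nonneg m (by exact_mod_cast hnpos.ne')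
    rw [Int.ModEq, this, Int.emod_emod_of_dvd _ dvd_rfl]
  have h2 : ω ^ m = ω ^ ((m % (n : ℤ)).toNat : ℕ) := by
    have := congrArg (Units.val) h1
    rw [Units.val_zpow_eq_zpow_val, Units.val_zpow_eq_zpow_val, val_u] at this
    rw [this, zpow_natCast]
  rw [h2, S.dlog_pow]
  -- now show ((m % n).toNat : ZMod 4) = (m : ZMod 4)
  have h4n : (4 : ℤ) ∣ (n : ℤ) := by
    have := S.h8
    exact_mod_cast dvd_trans (by norm_num : (4:ℤ) ∣ 8) (Int.natCast_dvd_natCast.mpr this)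
  have : (((m % (n : ℤ)).toNat : ℤ) : ZMod 4) = ((m : ℤ) : ZMod 4) := by
    rw [Int.toNat_of_nonneg (Int.emod_nonneg m (by exact_mod_cast hnpos.ne'))]
    rw [ZMod.intCast_eq_intCast_iff]
    have hmm : m % (n : ℤ) ≡ m [ZMOD (n : ℤ)] := Int.emod_emod_of_dvd m dvd_rfl
    exact hmm.of_dvd h4n
  exact_mod_cast this


lemma mem_cyc (S : Setup q ω) (x : F) (i : ℤ) :
    x ∈ cyc ω 4 i ↔ x ≠ 0 ∧ dlog ω x = ((i : ℤ) : ZMod 4) := by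
  constructor
  · rintro ⟨k, rfl⟩
    refine ⟨zpow_ne_zero _ S.omega_ne, ?_⟩
    rw [S.dlog_zpow]
    push_cast
    have h40 : (4 : ZMod 4) = 0 := by decide
    rw [h40]
    ring
  · rintro ⟨hx, hL⟩
    obtain ⟨a, ha, ha'⟩ := S.exists_rep hx
    rw [ha'] at hL
    have hcast : ((a : ℤ) : ZMod 4) = ((i : ℤ) : ZMod 4) := by
      rw [Int.cast_natCast]; exact hL
    have hdvd : (4 : ℤ) ∣ (i : ℤ) - (a : ℤ) := ((ZMod.intCast_eq_intCast_iff _ _ _).mp hcast).dvd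
    obtain ⟨c, hc⟩ := hdvd
    refine ⟨-c, ?_⟩
    rw [ha, ← zpow_natCast]
    congr 1
    push_cast
    linarith
lemma dlog_neg_one (S : Setup q ω) : dlog ω (-1 : F) = 0 := by
  have hne : (-1 : F) ≠ 0 := by norm_num
  obtain ⟨k, hk, hk'⟩ := S.exists_rep hne
  have h2 : S.u ^ (k * 2) = 1 := by
    apply Units.ext
    rw [Units.val_pow_eq_pow_val, val_u, Units.val_one, pow_mul, ← hk]
    norm_num
  have hdvd : (q ^ 2 - 1) ∣ k * 2 := by rw [← S.ord_u]; exact orderOf_dvd_of_pow_eq_one h2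
  obtain ⟨c, hc⟩ := hdvd
  obtain ⟨s, hs⟩ := S.h8
  have h8 : k * 2 = 8 * (s * c) := by rw [hc, hs]; ring
  have h4 : k = 4 * (s * c) := by omega
  rw [hk', h4]
  push_cast
  have h40 : (4 : ZMod 4) = 0 := by decide
  rw [h40]
  ring
lemma dlog_neg (S : Setup q ω) {x : F} (hx : x ≠ 0) : dlog ω (-x) = dlog ω x := by
  have : -x = -1 * x := by ring
  rw [this, S.dlog_mul (by norm_num) hx, S.dlog_neg_one, zero_add]
lemma zero_not_mem_cyc (S : Setup q ω) (i : ℤ) : (0 : F) ∉ cyc ω 4 i := by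
  rw [S.mem_cyc]
  simp
lemma mem_D0 (S : Setup q ω) (x : F) :
    x ∈ cyc ω 4 0 ∪ cyc ω 4 1 ↔ x ≠ 0 ∧ (dlog ω x = 0 ∨ dlog ω x = 1) := by
  rw [Set.mem_union, S.mem_cyc, S.mem_cyc]
  norm_num
  tauto
lemma mem_D2 (S : Setup q ω) (x : F) :
    x ∈ cyc ω 4 2 ∪ cyc ω 4 3 ↔ x ≠ 0 ∧ (dlog ω x = 2 ∨ dlog ω x = 3) := by
  rw [Set.mem_union, S.mem_cyc, S.mem_cyc]
  norm_num
  tauto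
lemma ind_D2_eq (S : Setup q ω) (v : F) :
    ind (v ∈ cyc ω 4 2 ∪ cyc ω 4 3) = 1 - ind (v = 0) - ind (v ∈ cyc ω 4 0 ∪ cyc ω 4 1) := by
  rcases eq_or_ne v 0 with hv | hv
  · rw [ind_of hv, ind_of_not (by rw [S.mem_D2]; tauto), ind_of_not (by rw [S.mem_D0]; tauto)]
    ring
  · rw [ind_of_not hv]
    have hk : dlog ω v = 0 ∨ dlog ω v = 1 ∨ dlog ω v = 2 ∨ dlog ω v = 3 := by
      generalize dlog ω v = k
      revert k; decide
    rcases hk with h | h | h | h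
    · rw [ind_of_not (fun hm => by rw [S.mem_D2, h] at hm; exact absurd hm.2 (by decide)),
        ind_of ((S.mem_D0 v).mpr ⟨hv, Or.inl h⟩)]
      ring
    · rw [ind_of_not (fun hm => by rw [S.mem_D2, h] at hm; exact absurd hm.2 (by decide)),
        ind_of ((S.mem_D0 v).mpr ⟨hv, Or.inr h⟩)]
      ring
    · rw [ind_of ((S.mem_D2 v).mpr ⟨hv, Or.inl h⟩),
        ind_of_not (fun hm => by rw [S.mem_D0, h] at hm; exact absurd hm.2 (by decide))]
      ring
    · rw [ind_of ((S.mem_D2 v).mpr ⟨hv, Or.inr h⟩),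
        ind_of_not (fun hm => by rw [S.mem_D0, h] at hm; exact absurd hm.2 (by decide))]
      ring
lemma ind_neg_D0 (S : Setup q ω) (x : F) :
    ind (-x ∈ cyc ω 4 0 ∪ cyc ω 4 1) = ind (x ∈ cyc ω 4 0 ∪ cyc ω 4 1) := by
  apply ind_congr
  rw [S.mem_D0, S.mem_D0]
  rcases eq_or_ne x 0 with hx | hx
  · simp [hx]
  · rw [S.dlog_neg hx]
    simp [hx]
lemma cnt_shift (S : Setup q ω) (i : ℤ) :
    ∑ v : F, ind (v ∈ cyc ω 4 i) = ∑ v : F, ind (v ∈ cyc ω 4 (i + 1)) := by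
  apply Fintype.sum_bijective (fun v : F => ω * v) (Equiv.mulLeft₀ ω S.omega_ne).bijective
  intro v
  apply ind_congr
  rw [S.mem_cyc, S.mem_cyc]
  rcases eq_or_ne v 0 with hv | hv
  · simp [hv]
  · have hωv : ω * v ≠ 0 := mul_ne_zero S.omega_ne hv
    rw [S.dlog_mul S.omega_ne hv, S.dlog_omega]
    push_cast
    constructor
    · rintro ⟨_, h⟩; exact ⟨hωv, by linear_combination h⟩
    · rintro ⟨_, h⟩; exact ⟨hv, by linear_combination h⟩


lemma ind_zmod4_cases (k : ZMod 4) :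
    ind (k = 0) + ind (k = 1) + ind (k = 2) + ind (k = 3) = 1 := by
  have hk : k = 0 ∨ k = 1 ∨ k = 2 ∨ k = 3 := by revert k; decide
  rcases hk with h|h|h|h <;> subst h
  · rw [ind_of rfl, ind_of_not (by decide), ind_of_not (by decide), ind_of_not (by decide)]; ring
  · rw [ind_of rfl, ind_of_not (by decide), ind_of_not (by decide), ind_of_not (by decide)]; ring
  · rw [ind_of rfl, ind_of_not (by decide), ind_of_not (by decide), ind_of_not (by decide)]; ring
  · rw [ind_of rfl, ind_of_not (by decide), ind_of_not (by decide), ind_of_not (by decide)]; ring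

lemma mem_C0 (S : Setup q ω) (x : F) : x ∈ cyc ω 4 0 ↔ x ≠ 0 ∧ dlog ω x = 0 := by
  rw [S.mem_cyc]; norm_num
lemma mem_C1 (S : Setup q ω) (x : F) : x ∈ cyc ω 4 1 ↔ x ≠ 0 ∧ dlog ω x = 1 := by
  rw [S.mem_cyc]; norm_num
lemma mem_C2 (S : Setup q ω) (x : F) : x ∈ cyc ω 4 2 ↔ x ≠ 0 ∧ dlog ω x = 2 := by
  rw [S.mem_cyc]; norm_num
lemma mem_C3 (S : Setup q ω) (x : F) : x ∈ cyc ω 4 3 ↔ x ≠ 0 ∧ dlog ω x = 3 := by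
  rw [S.mem_cyc]; norm_num

lemma pt_total (S : Setup q ω) (v : F) :
    ind (v ∈ cyc ω 4 0) + ind (v ∈ cyc ω 4 1) + ind (v ∈ cyc ω 4 2) + ind (v ∈ cyc ω 4 3)
      = 1 - ind (v = 0) := by
  rcases eq_or_ne v 0 with hv | hv
  · subst hv
    rw [ind_of rfl, ind_of_not (S.zero_not_mem_cyc 0), ind_of_not (S.zero_not_mem_cyc 1),
      ind_of_not (S.zero_not_mem_cyc 2), ind_of_not (S.zero_not_mem_cyc 3)]
    ring
  · rw [ind_of_not hv, ind_congr (S.mem_C0 v), ind_congr (S.mem_C1 v), ind_congr (S.mem_C2 v),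
      ind_congr (S.mem_C3 v), ind_congr (and_iff_right hv), ind_congr (and_iff_right hv),
      ind_congr (and_iff_right hv), ind_congr (and_iff_right hv)]
    rw [ind_zmod4_cases]
    ring

lemma sum_ind_zero : ∑ v : F, ind (v = 0) = 1 := by
  classical
  have := sum_ind_single (0:F) (fun _ => (1:ℤ))
  simpa using this

lemma cnt_total (S : Setup q ω) :
    ∑ v : F, (ind (v ∈ cyc ω 4 0) + ind (v ∈ cyc ω 4 1) + ind (v ∈ cyc ω 4 2)
      + ind (v ∈ cyc ω 4 3)) = (q:ℤ)^2 - 1 := by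
  rw [Finset.sum_congr rfl fun v _ => S.pt_total v, Finset.sum_sub_distrib, sum_ind_zero,
    Finset.sum_const, Finset.card_univ, S.hcard]
  push_cast
  ring

lemma cnt_c0 (S : Setup q ω) : 4 * ∑ v : F, ind (v ∈ cyc ω 4 0) = (q:ℤ)^2 - 1 := by
  have e0 := S.cnt_shift 0
  have e1 := S.cnt_shift 1
  have e2 := S.cnt_shift 2
  norm_num at e0 e1 e2
  have t := S.cnt_total
  rw [Finset.sum_add_distrib, Finset.sum_add_distrib, Finset.sum_add_distrib] at t
  linarith

lemma cnt_c1 (S : Setup q ω) :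
    ∑ v : F, ind (v ∈ cyc ω 4 1) = ∑ v : F, ind (v ∈ cyc ω 4 0) := by
  have e0 := S.cnt_shift 0; norm_num at e0; linarith
lemma cnt_c2 (S : Setup q ω) :
    ∑ v : F, ind (v ∈ cyc ω 4 2) = ∑ v : F, ind (v ∈ cyc ω 4 0) := by
  have e0 := S.cnt_shift 0; have e1 := S.cnt_shift 1; norm_num at e0 e1; linarith
lemma cnt_c3 (S : Setup q ω) :
    ∑ v : F, ind (v ∈ cyc ω 4 3) = ∑ v : F, ind (v ∈ cyc ω 4 0) := by
  have e0 := S.cnt_shift 0; have e1 := S.cnt_shift 1; have e2 := S.cnt_shift 2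
  norm_num at e0 e1 e2; linarith

lemma ind_D0_split (S : Setup q ω) (v : F) :
    ind (v ∈ cyc ω 4 0 ∪ cyc ω 4 1) = ind (v ∈ cyc ω 4 0) + ind (v ∈ cyc ω 4 1) := by
  rcases eq_or_ne v 0 with hv | hv
  · subst hv
    rw [ind_of_not (by rw [S.mem_D0]; tauto), ind_of_not (S.zero_not_mem_cyc 0),
      ind_of_not (S.zero_not_mem_cyc 1)]
    ring
  · by_cases h0 : dlog ω v = 0
    · rw [ind_of ((S.mem_D0 v).mpr ⟨hv, Or.inl h0⟩), ind_of ((S.mem_C0 v).mpr ⟨hv, h0⟩),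
        ind_of_not (fun hm => by rw [S.mem_C1] at hm; rw [h0] at hm; exact absurd hm.2 (by decide))]
      ring
    · by_cases h1 : dlog ω v = 1
      · rw [ind_of ((S.mem_D0 v).mpr ⟨hv, Or.inr h1⟩), ind_of ((S.mem_C1 v).mpr ⟨hv, h1⟩),
          ind_of_not (fun hm => by rw [S.mem_C0] at hm; rw [h1] at hm; exact absurd hm.2 (by decide))]
        ring
      · rw [ind_of_not (fun hm => by rw [S.mem_D0] at hm; tauto),
          ind_of_not (fun hm => by rw [S.mem_C0] at hm; tauto),
          ind_of_not (fun hm => by rw [S.mem_C1] at hm; tauto)]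
        ring

lemma ind_D2_split (S : Setup q ω) (v : F) :
    ind (v ∈ cyc ω 4 2 ∪ cyc ω 4 3) = ind (v ∈ cyc ω 4 2) + ind (v ∈ cyc ω 4 3) := by
  rcases eq_or_ne v 0 with hv | hv
  · subst hv
    rw [ind_of_not (by rw [S.mem_D2]; tauto), ind_of_not (S.zero_not_mem_cyc 2),
      ind_of_not (S.zero_not_mem_cyc 3)]
    ring
  · by_cases h0 : dlog ω v = 2
    · rw [ind_of ((S.mem_D2 v).mpr ⟨hv, Or.inl h0⟩), ind_of ((S.mem_C2 v).mpr ⟨hv, h0⟩),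
        ind_of_not (fun hm => by rw [S.mem_C3] at hm; rw [h0] at hm; exact absurd hm.2 (by decide))]
      ring
    · by_cases h1 : dlog ω v = 3
      · rw [ind_of ((S.mem_D2 v).mpr ⟨hv, Or.inr h1⟩), ind_of ((S.mem_C3 v).mpr ⟨hv, h1⟩),
          ind_of_not (fun hm => by rw [S.mem_C2] at hm; rw [h1] at hm; exact absurd hm.2 (by decide))]
        ring
      · rw [ind_of_not (fun hm => by rw [S.mem_D2] at hm; tauto),
          ind_of_not (fun hm => by rw [S.mem_C2] at hm; tauto),
          ind_of_not (fun hm => by rw [S.mem_C3] at hm; tauto)]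
        ring

lemma cnt_D0 (S : Setup q ω) :
    2 * ∑ v : F, ind (v ∈ cyc ω 4 0 ∪ cyc ω 4 1) = (q:ℤ)^2 - 1 := by
  rw [Finset.sum_congr rfl fun v _ => S.ind_D0_split v, Finset.sum_add_distrib, S.cnt_c1]
  have := S.cnt_c0
  linarith

lemma cnt_D2 (S : Setup q ω) :
    2 * ∑ v : F, ind (v ∈ cyc ω 4 2 ∪ cyc ω 4 3) = (q:ℤ)^2 - 1 := by
  rw [Finset.sum_congr rfl fun v _ => S.ind_D2_split v, Finset.sum_add_distrib, S.cnt_c2, S.cnt_c3]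
  have := S.cnt_c0
  linarith


lemma corr_diff (S : Setup q ω) (x : F) :
    (∑ v : F, ind (v + x ∈ cyc ω 4 0 ∪ cyc ω 4 1) * ind (v ∈ cyc ω 4 0 ∪ cyc ω 4 1))
      - (∑ v : F, ind (v + x ∈ cyc ω 4 2 ∪ cyc ω 4 3) * ind (v ∈ cyc ω 4 2 ∪ cyc ω 4 3))
      = ind (x ∈ cyc ω 4 2 ∪ cyc ω 4 3) - ind (x ∈ cyc ω 4 0 ∪ cyc ω 4 1) := by
  classical
  have key : ∀ v : F, ind (v + x ∈ cyc ω 4 0 ∪ cyc ω 4 1) * ind (v ∈ cyc ω 4 0 ∪ cyc ω 4 1)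
      - ind (v + x ∈ cyc ω 4 2 ∪ cyc ω 4 3) * ind (v ∈ cyc ω 4 2 ∪ cyc ω 4 3)
      = (ind (v + x ∈ cyc ω 4 0 ∪ cyc ω 4 1) + ind (v ∈ cyc ω 4 0 ∪ cyc ω 4 1)
          + ind (v = 0) + ind (v + x = 0))
        - (1 + ind (v + x = 0) * ind (v = 0) + ind (v + x = 0) * ind (v ∈ cyc ω 4 0 ∪ cyc ω 4 1)
           + ind (v + x ∈ cyc ω 4 0 ∪ cyc ω 4 1) * ind (v = 0)) := by
    intro v
    rw [S.ind_D2_eq v, S.ind_D2_eq (v + x)]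
    ring
  have A1 : ∑ v : F, ind (v + x ∈ cyc ω 4 0 ∪ cyc ω 4 1)
      = ∑ v : F, ind (v ∈ cyc ω 4 0 ∪ cyc ω 4 1) :=
    sum_translate' (fun w => ind (w ∈ cyc ω 4 0 ∪ cyc ω 4 1)) x
  have Z1 : ∑ v : F, ind (v + x = 0) = 1 := by
    rw [sum_translate' (fun w => ind (w = 0)) x, sum_ind_zero]
  have hvx : ∀ v : F, ind (v + x = 0) = ind (v = -x) := fun v =>
    ind_congr (by constructor <;> intro h <;> [linear_combination h; linear_combination h])
  have ZZ : ∑ v : F, ind (v + x = 0) * ind (v = 0) = ind (x = 0) := by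
    rw [Finset.sum_congr rfl fun v _ => by rw [hvx v], sum_ind_single (-x) (fun v => ind (v = 0))]
    exact ind_congr (by simp)
  have ZA : ∑ v : F, ind (v + x = 0) * ind (v ∈ cyc ω 4 0 ∪ cyc ω 4 1)
      = ind (x ∈ cyc ω 4 0 ∪ cyc ω 4 1) := by
    rw [Finset.sum_congr rfl fun v _ => by rw [hvx v],
      sum_ind_single (-x) (fun v => ind (v ∈ cyc ω 4 0 ∪ cyc ω 4 1))]
    exact S.ind_neg_D0 x
  have AZ : ∑ v : F, ind (v + x ∈ cyc ω 4 0 ∪ cyc ω 4 1) * ind (v = 0)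
      = ind (x ∈ cyc ω 4 0 ∪ cyc ω 4 1) := by
    rw [sum_ind_single' (0:F) (fun v => ind (v + x ∈ cyc ω 4 0 ∪ cyc ω 4 1))]
    exact ind_congr (by rw [zero_add])
  have S1 : ∑ _v : F, (1:ℤ) = (q:ℤ)^2 := by
    rw [Finset.sum_const, Finset.card_univ, S.hcard]; push_cast; ring
  have hD2x := S.ind_D2_eq x
  have hD0 := S.cnt_D0
  rw [← Finset.sum_sub_distrib, Finset.sum_congr rfl fun v _ => key v, Finset.sum_sub_distrib,
    Finset.sum_add_distrib, Finset.sum_add_distrib, Finset.sum_add_distrib,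
    Finset.sum_add_distrib, Finset.sum_add_distrib, Finset.sum_add_distrib,
    A1, Z1, ZZ, ZA, AZ, S1, sum_ind_zero, hD2x]
  linarith

end Setup

/-- sign function of D₀/D₂ classes -/
def esgn (k : ZMod 4) : ℤ := if k = 0 ∨ k = 1 then 1 else -1
/-- sign function of quadratic residue classes -/
def e2sgn (k : ZMod 4) : ℤ := if k = 0 ∨ k = 2 then 1 else -1

noncomputable def eta (ω v : F) : ℤ :=
  ind (v ∈ cyc ω 4 0 ∪ cyc ω 4 1) - ind (v ∈ cyc ω 4 2 ∪ cyc ω 4 3)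

open Classical in
noncomputable def rho (ω v : F) : ℤ := if v = 0 then 0 else e2sgn (dlog ω v)

namespace Setup

lemma eta_zero (S : Setup q ω) : eta ω (0 : F) = 0 := by
  rw [eta, ind_of_not (by rw [S.mem_D0]; tauto), ind_of_not (by rw [S.mem_D2]; tauto)]
  ring

lemma eta_of_ne (S : Setup q ω) {v : F} (hv : v ≠ 0) : eta ω v = esgn (dlog ω v) := by
  rw [eta, ind_congr (S.mem_D0 v), ind_congr (S.mem_D2 v), ind_congr (and_iff_right hv),
    ind_congr (and_iff_right hv), esgn]
  have hk : dlog ω v = 0 ∨ dlog ω v = 1 ∨ dlog ω v = 2 ∨ dlog ω v = 3 := by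
    generalize dlog ω v = k; revert k; decide
  rcases hk with h|h|h|h <;> rw [h] <;>
    [ rw [ind_of (Or.inl rfl), ind_of_not (by decide), if_pos (by decide)];
      rw [ind_of (Or.inr rfl), ind_of_not (by decide), if_pos (by decide)];
      rw [ind_of (Or.inl rfl), ind_of_not (by decide), if_neg (by decide)];
      rw [ind_of (Or.inr rfl), ind_of_not (by decide), if_neg (by decide)] ] <;> ring

lemma rho_of_ne {v : F} (hv : v ≠ 0) : rho ω v = e2sgn (dlog ω v) := by
  rw [rho, if_neg hv]

lemma rho_mul (S : Setup q ω) {u v : F} (hu : u ≠ 0) (hv : v ≠ 0) :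
    rho ω (u * v) = rho ω u * rho ω v := by
  rw [rho_of_ne hu, rho_of_ne hv, rho_of_ne (mul_ne_zero hu hv), S.dlog_mul hu hv]
  generalize dlog ω u = k; generalize dlog ω v = l
  revert k l; decide

lemma rho_frob (S : Setup q ω) (v : F) : rho ω (v ^ q) = rho ω v := by
  rcases eq_or_ne v 0 with hv | hv
  · rw [hv, zero_pow (by have := S.q3; omega)]
  · rw [rho_of_ne hv, rho_of_ne (pow_ne_zero q hv), S.dlog_pow_nat hv]
    have hq : ((q : ℕ) : ZMod 4) = 3 := by
      have h : q = 4 * (q / 4) + 3 := by have := S.h4; omega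
      rw [h]
      push_cast
      have h40 : (4 : ZMod 4) = 0 := by decide
      rw [h40]; ring
    rw [hq]
    generalize dlog ω v = k
    revert k; decide

lemma frob_invol (S : Setup q ω) : Function.Involutive (fun r : F => r ^ q) := by
  intro r
  dsimp only
  rw [← pow_mul, ← pow_two, ← S.hcard, FiniteField.pow_card]

lemma ind_frob_C3 (S : Setup q ω) (r : F) :
    ind (r ^ q ∈ cyc ω 4 3) = ind (r ∈ cyc ω 4 1) := by
  apply ind_congr
  rw [S.mem_C3, S.mem_C1]
  rcases eq_or_ne r 0 with hr | hr
  · rw [hr, zero_pow (by have := S.q3; omega)]; tauto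
  · rw [S.dlog_pow_nat hr]
    have hq : ((q : ℕ) : ZMod 4) = 3 := by
      have h : q = 4 * (q / 4) + 3 := by have := S.h4; omega
      rw [h]; push_cast
      have h40 : (4 : ZMod 4) = 0 := by decide
      rw [h40]; ring
    rw [hq]
    constructor
    · rintro ⟨-, h⟩
      refine ⟨hr, ?_⟩
      have key : ∀ k : ZMod 4, 3 * k = 3 → k = 1 := by decide
      exact key _ h
    · rintro ⟨-, h⟩
      exact ⟨pow_ne_zero q hr, by rw [h]; decide⟩

lemma sum_ind_eq_one {V : Type*} [Fintype V] (c : V) : ∑ v : V, ind (v = c) = 1 := by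
  classical
  have := sum_ind_single c (fun _ => (1:ℤ))
  simpa using this

/-- The translation equivalence used for the eta sum. -/
noncomputable def psiEquiv (S : Setup q ω) {x : F} (hx : x ≠ 0) : F ≃ F where
  toFun := fun r => x * (r - 1)⁻¹
  invFun := fun v => 1 + x * v⁻¹
  left_inv := by
    intro r
    rcases eq_or_ne r 1 with hr | hr
    · simp [hr]
    · have h1 : r - 1 ≠ 0 := sub_ne_zero.mpr hr
      field_simp
      ring
  right_inv := by
    intro v
    rcases eq_or_ne v 0 with hv | hv
    · simp [hv]
    · have h1 : x * v⁻¹ ≠ 0 := mul_ne_zero hx (inv_ne_zero hv)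
      have h2 : 1 + x * v⁻¹ - 1 = x * v⁻¹ := by ring
      dsimp only
      rw [h2]
      field_simp

lemma one_mem_C0 (S : Setup q ω) : (1 : F) ∈ cyc ω 4 0 :=
  (S.mem_C0 1).mpr ⟨one_ne_zero, S.dlog_one⟩

lemma eta_key (S : Setup q ω) {x : F} (hx : x ≠ 0) (r : F) :
    eta ω (x * (r - 1)⁻¹) * eta ω (x * (r - 1)⁻¹ + x)
      = (ind (r ∈ cyc ω 4 0) - ind (r = 1) - ind (r ∈ cyc ω 4 2))
        + rho ω x * (rho ω (r - 1) * ind (r ∈ cyc ω 4 1)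
            - rho ω (r - 1) * ind (r ∈ cyc ω 4 3)) := by
  rcases eq_or_ne r 1 with hr1 | hr1
  · subst hr1
    rw [show (1 : F) - 1 = 0 by ring, inv_zero, mul_zero, S.eta_zero, zero_mul,
      ind_of (S.one_mem_C0), ind_of rfl,
      ind_of_not (fun hm => by rw [S.mem_C2] at hm; rw [S.dlog_one] at hm; exact absurd hm.2 (by decide)),
      ind_of_not (fun hm => by rw [S.mem_C1] at hm; rw [S.dlog_one] at hm; exact absurd hm.2 (by decide)),
      ind_of_not (fun hm => by rw [S.mem_C3] at hm; rw [S.dlog_one] at hm; exact absurd hm.2 (by decide))]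
    ring
  · rcases eq_or_ne r 0 with hr0 | hr0
    · subst hr0
      have h1 : x * ((0:F) - 1)⁻¹ + x = 0 := by field_simp; ring
      rw [h1, S.eta_zero, mul_zero,
        ind_of_not (fun hm => ((S.mem_C0 0).mp hm).1 rfl),
        ind_of_not (fun hm => ((S.mem_C2 0).mp hm).1 rfl),
        ind_of_not (fun hm => ((S.mem_C1 0).mp hm).1 rfl),
        ind_of_not (fun hm => ((S.mem_C3 0).mp hm).1 rfl),
        ind_of_not (by norm_num)]
      ring
    · have hs : r - 1 ≠ 0 := sub_ne_zero.mpr hr1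
      have hv : x * (r - 1)⁻¹ ≠ 0 := mul_ne_zero hx (inv_ne_zero hs)
      have hvr : x * (r - 1)⁻¹ + x = (x * (r - 1)⁻¹) * r := by
        field_simp
        ring
      have hxv : x = (x * (r - 1)⁻¹) * (r - 1) := by field_simp
      rw [hvr, S.eta_of_ne hv, S.eta_of_ne (mul_ne_zero hv hr0), S.dlog_mul hv hr0,
        ind_of_not hr1, ind_congr (S.mem_C0 r), ind_congr (S.mem_C1 r), ind_congr (S.mem_C2 r),
        ind_congr (S.mem_C3 r), ind_congr (and_iff_right hr0), ind_congr (and_iff_right hr0),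
        ind_congr (and_iff_right hr0), ind_congr (and_iff_right hr0),
        show rho ω x = rho ω (x * (r - 1)⁻¹) * rho ω (r - 1) from by
          rw [← S.rho_mul hv hs, ← hxv],
        rho_of_ne hv, rho_of_ne hs]
      -- goal now in terms of esgn/e2sgn of dlogs
      have hm : dlog ω r = 0 ∨ dlog ω r = 1 ∨ dlog ω r = 2 ∨ dlog ω r = 3 := by
        generalize dlog ω r = m; revert m; decide
      rcases hm with h|h|h|h <;> rw [h]
      · rw [ind_of (rfl : (0:ZMod 4) = 0), ind_of_not (show ¬((0:ZMod 4) = 2) by decide),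
          ind_of_not (show ¬((0:ZMod 4) = 1) by decide), ind_of_not (show ¬((0:ZMod 4) = 3) by decide)]
        exact (show ∀ a b : ZMod 4, esgn a * esgn (a + 0)
          = 1 - 0 - 0 + e2sgn a * e2sgn b * (e2sgn b * 0 - e2sgn b * 0) from by decide) _ _
      · rw [ind_of (rfl : (1:ZMod 4) = 1), ind_of_not (show ¬((1:ZMod 4) = 0) by decide),
          ind_of_not (show ¬((1:ZMod 4) = 2) by decide), ind_of_not (show ¬((1:ZMod 4) = 3) by decide)]
        exact (show ∀ a b : ZMod 4, esgn a * esgn (a + 1)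
          = 0 - 0 - 0 + e2sgn a * e2sgn b * (e2sgn b * 1 - e2sgn b * 0) from by decide) _ _
      · rw [ind_of (rfl : (2:ZMod 4) = 2), ind_of_not (show ¬((2:ZMod 4) = 0) by decide),
          ind_of_not (show ¬((2:ZMod 4) = 1) by decide), ind_of_not (show ¬((2:ZMod 4) = 3) by decide)]
        exact (show ∀ a b : ZMod 4, esgn a * esgn (a + 2)
          = 0 - 0 - 1 + e2sgn a * e2sgn b * (e2sgn b * 0 - e2sgn b * 0) from by decide) _ _
      · rw [ind_of (rfl : (3:ZMod 4) = 3), ind_of_not (show ¬((3:ZMod 4) = 0) by decide),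
          ind_of_not (show ¬((3:ZMod 4) = 1) by decide), ind_of_not (show ¬((3:ZMod 4) = 2) by decide)]
        exact (show ∀ a b : ZMod 4, esgn a * esgn (a + 3)
          = 0 - 0 - 0 + e2sgn a * e2sgn b * (e2sgn b * 0 - e2sgn b * 1) from by decide) _ _

lemma psiEquiv_apply (S : Setup q ω) {x : F} (hx : x ≠ 0) (r : F) :
    (S.psiEquiv hx) r = x * (r - 1)⁻¹ := rfl

lemma eta_sum (S : Setup q ω) {x : F} (hx : x ≠ 0) :
    ∑ v : F, eta ω v * eta ω (v + x) = -1 := by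
  have h1 : ∑ r : F, eta ω (x * (r - 1)⁻¹) * eta ω (x * (r - 1)⁻¹ + x)
      = ∑ v : F, eta ω v * eta ω (v + x) := by
    apply Fintype.sum_bijective (S.psiEquiv hx) (S.psiEquiv hx).bijective
    intro r
    rw [S.psiEquiv_apply hx r]
  rw [← h1, Finset.sum_congr rfl fun r _ => S.eta_key hx r]
  have hT : ∑ r : F, rho ω (r - 1) * ind (r ∈ cyc ω 4 1)
      = ∑ r : F, rho ω (r - 1) * ind (r ∈ cyc ω 4 3) := by
    have hptw : ∀ r : F, rho ω (r - 1) * ind (r ∈ cyc ω 4 1)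
        = rho ω (r ^ q - 1) * ind (r ^ q ∈ cyc ω 4 3) := by
      intro r
      rw [S.ind_frob_C3 r]
      congr 1
      have h2 : r ^ q - 1 = (r - 1) ^ q := by rw [S.hfrob r 1, one_pow]
      rw [h2, S.rho_frob]
    rw [Finset.sum_congr rfl fun r _ => hptw r]
    exact Fintype.sum_bijective (fun r : F => r ^ q) (S.frob_invol).bijective _ _ (fun r => rfl)
  rw [Finset.sum_add_distrib, Finset.sum_sub_distrib, Finset.sum_sub_distrib,
    ← Finset.mul_sum, Finset.sum_sub_distrib, sum_ind_eq_one, S.cnt_c2, hT, sub_self, mul_zero]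
  ring

lemma corr_sum (S : Setup q ω) {x : F} (hx : x ≠ 0) :
    2 * ((∑ v : F, ind (v + x ∈ cyc ω 4 0 ∪ cyc ω 4 1) * ind (v ∈ cyc ω 4 0 ∪ cyc ω 4 1))
        + (∑ v : F, ind (v + x ∈ cyc ω 4 2 ∪ cyc ω 4 3) * ind (v ∈ cyc ω 4 2 ∪ cyc ω 4 3)))
      = (q:ℤ)^2 - 3 := by
  classical
  have key : ∀ v : F,
      2 * (ind (v + x ∈ cyc ω 4 0 ∪ cyc ω 4 1) * ind (v ∈ cyc ω 4 0 ∪ cyc ω 4 1)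
        + ind (v + x ∈ cyc ω 4 2 ∪ cyc ω 4 3) * ind (v ∈ cyc ω 4 2 ∪ cyc ω 4 3))
      = (1 - ind (v = 0) - ind (v + x = 0) + ind (v + x = 0) * ind (v = 0))
        + eta ω v * eta ω (v + x) := by
    intro v
    simp only [eta]
    rw [S.ind_D2_eq v, S.ind_D2_eq (v + x)]
    ring
  have h2 : ∑ v : F, 2 * (ind (v + x ∈ cyc ω 4 0 ∪ cyc ω 4 1) * ind (v ∈ cyc ω 4 0 ∪ cyc ω 4 1)
        + ind (v + x ∈ cyc ω 4 2 ∪ cyc ω 4 3) * ind (v ∈ cyc ω 4 2 ∪ cyc ω 4 3))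
      = (q:ℤ)^2 - 3 := by
    rw [Finset.sum_congr rfl fun v _ => key v, Finset.sum_add_distrib, S.eta_sum hx,
      Finset.sum_add_distrib, Finset.sum_sub_distrib, Finset.sum_sub_distrib, sum_ind_zero]
    have Z1 : ∑ v : F, ind (v + x = 0) = 1 := by
      rw [sum_translate' (fun w => ind (w = 0)) x, sum_ind_zero]
    have hvx : ∀ v : F, ind (v + x = 0) = ind (v = -x) := fun v =>
      ind_congr (by constructor <;> intro h <;> [linear_combination h; linear_combination h])
    have ZZ : ∑ v : F, ind (v + x = 0) * ind (v = 0) = 0 := by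
      rw [Finset.sum_congr rfl fun v _ => by rw [hvx v],
        sum_ind_single (-x) (fun v => ind (v = 0))]
      exact ind_of_not (by simpa using hx)
    have S1 : ∑ _v : F, (1:ℤ) = (q:ℤ)^2 := by
      rw [Finset.sum_const, Finset.card_univ, S.hcard]; push_cast; ring
    rw [Z1, ZZ, S1]
    ring
  calc 2 * ((∑ v : F, ind (v + x ∈ cyc ω 4 0 ∪ cyc ω 4 1) * ind (v ∈ cyc ω 4 0 ∪ cyc ω 4 1))
        + (∑ v : F, ind (v + x ∈ cyc ω 4 2 ∪ cyc ω 4 3) * ind (v ∈ cyc ω 4 2 ∪ cyc ω 4 3)))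
      = ∑ v : F, 2 * (ind (v + x ∈ cyc ω 4 0 ∪ cyc ω 4 1) * ind (v ∈ cyc ω 4 0 ∪ cyc ω 4 1)
        + ind (v + x ∈ cyc ω 4 2 ∪ cyc ω 4 3) * ind (v ∈ cyc ω 4 2 ∪ cyc ω 4 3)) := by
        rw [← Finset.sum_add_distrib, Finset.mul_sum]
  _ = (q:ℤ)^2 - 3 := h2

end Setup

lemma ind_compl (A : Set F) (v : F) : ind (v ∈ Aᶜ) = 1 - ind (v ∈ A) := by
  by_cases h : v ∈ A
  · rw [ind_of h, ind_of_not (by simpa using h)]; ring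
  · rw [ind_of_not h, ind_of ((Set.mem_compl_iff A v).mpr h)]; ring

lemma sum_zmod2 (g : ZMod 2 → ℤ) : ∑ a : ZMod 2, g a = g 0 + g 1 := by
  have h : (Finset.univ : Finset (ZMod 2)) = {0, 1} := by decide
  rw [h, Finset.sum_insert (by decide), Finset.sum_singleton]

lemma ind_pair0 (X Y : Set F) (v : F) :
    ind (((0 : ZMod 2), v) ∈ ({0} : Set (ZMod 2)) ×ˢ X ∪ ({1} : Set (ZMod 2)) ×ˢ Y)
      = ind (v ∈ X) := by
  apply ind_congr
  simp [Set.mem_prod, (by decide : (0:ZMod 2) ≠ 1)]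

lemma ind_pair1 (X Y : Set F) (v : F) :
    ind (((1 : ZMod 2), v) ∈ ({0} : Set (ZMod 2)) ×ˢ X ∪ ({1} : Set (ZMod 2)) ×ˢ Y)
      = ind (v ∈ Y) := by
  apply ind_congr
  simp [Set.mem_prod, (by decide : (1:ZMod 2) ≠ 0)]

lemma cnt_compl (A : Set F) :
    ∑ v : F, ind (v ∈ Aᶜ) = (Fintype.card F : ℤ) - ∑ v : F, ind (v ∈ A) := by
  rw [Finset.sum_congr rfl fun v _ => ind_compl A v, Finset.sum_sub_distrib, Finset.sum_const,
    Finset.card_univ]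
  simp

lemma sum_compl_left (A B : Set F) (x : F) :
    ∑ v : F, ind (v + x ∈ Aᶜ) * ind (v ∈ B)
      = (∑ v : F, ind (v ∈ B)) - ∑ v : F, ind (v + x ∈ A) * ind (v ∈ B) := by
  have key : ∀ v : F, ind (v + x ∈ Aᶜ) * ind (v ∈ B)
      = ind (v ∈ B) - ind (v + x ∈ A) * ind (v ∈ B) := by
    intro v; rw [ind_compl]; ring
  rw [Finset.sum_congr rfl fun v _ => key v, Finset.sum_sub_distrib]

lemma sum_compl_right (A B : Set F) (x : F) :
    ∑ v : F, ind (v + x ∈ A) * ind (v ∈ Bᶜ)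
      = (∑ v : F, ind (v ∈ A)) - ∑ v : F, ind (v + x ∈ A) * ind (v ∈ B) := by
  have key : ∀ v : F, ind (v + x ∈ A) * ind (v ∈ Bᶜ)
      = ind (v + x ∈ A) - ind (v + x ∈ A) * ind (v ∈ B) := by
    intro v; rw [ind_compl]; ring
  rw [Finset.sum_congr rfl fun v _ => key v, Finset.sum_sub_distrib,
    sum_translate' (fun w => ind (w ∈ A)) x]

lemma sum_compl_compl (A B : Set F) (x : F) :
    ∑ v : F, ind (v + x ∈ Aᶜ) * ind (v ∈ Bᶜ)
      = (Fintype.card F : ℤ) - (∑ v : F, ind (v ∈ A)) - (∑ v : F, ind (v ∈ B))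
        + ∑ v : F, ind (v + x ∈ A) * ind (v ∈ B) := by
  have key : ∀ v : F, ind (v + x ∈ Aᶜ) * ind (v ∈ Bᶜ)
      = 1 - ind (v + x ∈ A) - ind (v ∈ B) + ind (v + x ∈ A) * ind (v ∈ B) := by
    intro v; rw [ind_compl, ind_compl]; ring
  rw [Finset.sum_congr rfl fun v _ => key v, Finset.sum_add_distrib, Finset.sum_sub_distrib,
    Finset.sum_sub_distrib, Finset.sum_const, Finset.card_univ,
    sum_translate' (fun w => ind (w ∈ A)) x]
  simp

lemma dcG0 (X Y X' Y' : Set F) (x : F) :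
    (diffCount (({0} : Set (ZMod 2)) ×ˢ X ∪ ({1} : Set (ZMod 2)) ×ˢ Y)
        (({0} : Set (ZMod 2)) ×ˢ X' ∪ ({1} : Set (ZMod 2)) ×ˢ Y') ((0 : ZMod 2), x) : ℤ)
      = (∑ v : F, ind (v + x ∈ X) * ind (v ∈ X'))
        + (∑ v : F, ind (v + x ∈ Y) * ind (v ∈ Y')) := by
  rw [diffCount_eq_sum, Fintype.sum_prod_type, sum_zmod2]
  congr 1
  · apply Finset.sum_congr rfl
    intro v _
    rw [show ((0 : ZMod 2), v) + ((0 : ZMod 2), x) = ((0 : ZMod 2), v + x) by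
      rw [Prod.mk_add_mk, add_zero], ind_pair0, ind_pair0]
  · apply Finset.sum_congr rfl
    intro v _
    rw [show ((1 : ZMod 2), v) + ((0 : ZMod 2), x) = ((1 : ZMod 2), v + x) by
      rw [Prod.mk_add_mk, add_zero], ind_pair1, ind_pair1]

lemma dcG1 (X Y X' Y' : Set F) (x : F) :
    (diffCount (({0} : Set (ZMod 2)) ×ˢ X ∪ ({1} : Set (ZMod 2)) ×ˢ Y)
        (({0} : Set (ZMod 2)) ×ˢ X' ∪ ({1} : Set (ZMod 2)) ×ˢ Y') ((1 : ZMod 2), x) : ℤ)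
      = (∑ v : F, ind (v + x ∈ Y) * ind (v ∈ X'))
        + (∑ v : F, ind (v + x ∈ X) * ind (v ∈ Y')) := by
  rw [diffCount_eq_sum, Fintype.sum_prod_type, sum_zmod2]
  congr 1
  · apply Finset.sum_congr rfl
    intro v _
    rw [show ((0 : ZMod 2), v) + ((1 : ZMod 2), x) = ((1 : ZMod 2), v + x) by
      rw [Prod.mk_add_mk, zero_add], ind_pair1, ind_pair0]
  · apply Finset.sum_congr rfl
    intro v _
    rw [show ((1 : ZMod 2), v) + ((1 : ZMod 2), x) = ((0 : ZMod 2), v + x) by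
      rw [Prod.mk_add_mk]; norm_num; decide, ind_pair0, ind_pair1]

lemma cntG (X Y : Set F) :
    ∑ p : ZMod 2 × F, ind (p ∈ ({0} : Set (ZMod 2)) ×ˢ X ∪ ({1} : Set (ZMod 2)) ×ˢ Y)
      = (∑ v : F, ind (v ∈ X)) + ∑ v : F, ind (v ∈ Y) := by
  rw [Fintype.sum_prod_type, sum_zmod2]
  congr 1
  · exact Finset.sum_congr rfl fun v _ => ind_pair0 X Y v
  · exact Finset.sum_congr rfl fun v _ => ind_pair1 X Y v

end Main

theorem stmt_5 (q : ℕ) (hq : IsPrimePow q) (h4 : q % 4 = 3)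
    (F : Type*) [Field F] [Fintype F] (hF : Fintype.card F = q ^ 2)
    (ω : F) (hω : ∀ x : F, x ≠ 0 → ∃ k : ℕ, x = ω ^ k)
    (E₀ E₁ E₂ E₃ : Set F)
    (hE₀ : E₀.ncard = (q ^ 2 - q) / 2) (hE₁ : E₁.ncard = (q ^ 2 - q) / 2)
    (hE₂ : E₂.ncard = (q ^ 2 - q) / 2) (hE₃ : E₃.ncard = (q ^ 2 - q) / 2)
    (hH : ∀ x : F, x ≠ 0 →
      diffCount E₀ E₀ x + diffCount E₁ E₁ x + diffCount E₂ E₂ x + diffCount E₃ E₃ x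
        = q ^ 2 - 2 * q)
    (hMix : ∀ x : F,
      (diffCount E₀ E₁ x + diffCount E₁ E₀ x + diffCount E₂ E₃ x + diffCount E₃ E₂ x : ℤ)
        = ((q : ℤ) - 1) ^ 2 + 2 * ind (x ∈ cyc ω 4 0 ∪ cyc ω 4 1)
            - 2 * ind (x ∈ cyc ω 4 2 ∪ cyc ω 4 3)) :
    let D₀ : Set F := cyc ω 4 0 ∪ cyc ω 4 1
    let D₂ : Set F := cyc ω 4 2 ∪ cyc ω 4 3
    let B₀ : Set (ZMod 2 × F) := ({0} : Set (ZMod 2)) ×ˢ D₀ ∪ ({1} : Set (ZMod 2)) ×ˢ D₀ᶜ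
    let B₁ : Set (ZMod 2 × F) := ({0} : Set (ZMod 2)) ×ˢ D₂ ∪ ({1} : Set (ZMod 2)) ×ˢ D₂
    let B₂ : Set (ZMod 2 × F) := ({0} : Set (ZMod 2)) ×ˢ E₀ ∪ ({1} : Set (ZMod 2)) ×ˢ E₁ᶜ
    let B₃ : Set (ZMod 2 × F) := ({0} : Set (ZMod 2)) ×ˢ E₂ ∪ ({1} : Set (ZMod 2)) ×ˢ E₃ᶜ
    B₀.ncard = q ^ 2 ∧ B₁.ncard = q ^ 2 - 1 ∧ B₂.ncard = q ^ 2 ∧ B₃.ncard = q ^ 2 ∧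
    ∀ g : ZMod 2 × F, g ≠ 0 →
      diffCount B₀ B₀ g + diffCount B₁ B₁ g + diffCount B₂ B₂ g + diffCount B₃ B₃ g
        = 2 * q ^ 2 - 2 := by
  classical
  have S : Setup q ω := by
    refine ⟨h4, hF, hω, ?_⟩
    obtain ⟨p, e, hp, he, hpe⟩ := hq
    have hpnat : p.Prime := Nat.prime_iff.mpr hp
    obtain ⟨n, hrp, hcardr⟩ := FiniteField.card F (ringChar F)
    have hq2 : Fintype.card F = p ^ (2 * e) := by rw [hF, ← hpe]; ring
    have hrc : ringChar F = p := by
      have hdvd : ringChar F ∣ p ^ (2 * e) := by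
        rw [← hq2, hcardr]
        exact dvd_pow_self _ (by exact_mod_cast n.pos.ne')
      have h2 := hrp.dvd_of_dvd_pow hdvd
      exact (Nat.prime_dvd_prime_iff_eq hrp hpnat).mp h2
    haveI : Fact p.Prime := ⟨hpnat⟩
    haveI : CharP F p := hrc ▸ ringChar.charP F
    intro a b
    rw [← hpe]
    exact sub_pow_char_pow a b e
  intro D₀ D₂ B₀ B₁ B₂ B₃
  have hD0def : D₀ = cyc ω 4 0 ∪ cyc ω 4 1 := rfl
  have hD2def : D₂ = cyc ω 4 2 ∪ cyc ω 4 3 := rfl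
  have hB0def : B₀ = ({0} : Set (ZMod 2)) ×ˢ (cyc ω 4 0 ∪ cyc ω 4 1)
      ∪ ({1} : Set (ZMod 2)) ×ˢ (cyc ω 4 0 ∪ cyc ω 4 1)ᶜ := rfl
  have hB1def : B₁ = ({0} : Set (ZMod 2)) ×ˢ (cyc ω 4 2 ∪ cyc ω 4 3)
      ∪ ({1} : Set (ZMod 2)) ×ˢ (cyc ω 4 2 ∪ cyc ω 4 3) := rfl
  have hB2def : B₂ = ({0} : Set (ZMod 2)) ×ˢ E₀ ∪ ({1} : Set (ZMod 2)) ×ˢ E₁ᶜ := rfl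
  have hB3def : B₃ = ({0} : Set (ZMod 2)) ×ˢ E₂ ∪ ({1} : Set (ZMod 2)) ×ˢ E₃ᶜ := rfl
  have hq3 : 3 ≤ q := S.q3
  have h1q2 : 1 ≤ q ^ 2 := by nlinarith
  have h2q : 2 * q ≤ q ^ 2 := by nlinarith
  have hqq : q ≤ q ^ 2 := by nlinarith
  have h22 : 2 ≤ 2 * q ^ 2 := by nlinarith
  have hcd0 := S.cnt_D0
  have hcd2 := S.cnt_D2
  have hdvd2 : 2 ∣ q ^ 2 - q := by
    have hq2m : q ^ 2 % 2 = 1 := by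
      have h1 : q % 2 = 1 := by omega
      rw [pow_two, Nat.mul_mod, h1]
    omega
  have hEcast : ∀ E : Set F, E.ncard = (q ^ 2 - q) / 2 →
      2 * (∑ v : F, ind (v ∈ E)) = (q : ℤ) ^ 2 - q := by
    intro E hE
    have h1 : 2 * E.ncard = q ^ 2 - q := by rw [hE]; omega
    zify [hqq] at h1
    linarith [ncard_eq_sum_ind E]
  have hE0s := hEcast E₀ hE₀
  have hE1s := hEcast E₁ hE₁
  have hE2s := hEcast E₂ hE₂
  have hE3s := hEcast E₃ hE₃
  refine ⟨?_, ?_, ?_, ?_, ?_⟩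
  · rw [hB0def]
    have h1 : ((({0} : Set (ZMod 2)) ×ˢ (cyc ω 4 0 ∪ cyc ω 4 1)
        ∪ ({1} : Set (ZMod 2)) ×ˢ (cyc ω 4 0 ∪ cyc ω 4 1)ᶜ).ncard : ℤ) = (q : ℤ) ^ 2 := by
      rw [ncard_eq_sum_ind, cntG, cnt_compl, hF]
      push_cast
      linarith
    exact_mod_cast h1
  · rw [hB1def]
    have h1 : ((({0} : Set (ZMod 2)) ×ˢ (cyc ω 4 2 ∪ cyc ω 4 3)
        ∪ ({1} : Set (ZMod 2)) ×ˢ (cyc ω 4 2 ∪ cyc ω 4 3)).ncard : ℤ) = (q : ℤ) ^ 2 - 1 := by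
      rw [ncard_eq_sum_ind, cntG]
      linarith
    have h2 : (((q ^ 2 - 1 : ℕ)) : ℤ) = (q : ℤ) ^ 2 - 1 := by
      rw [Nat.cast_sub h1q2]; push_cast; ring
    rw [← h2] at h1
    exact_mod_cast h1
  · rw [hB2def]
    have h1 : ((({0} : Set (ZMod 2)) ×ˢ E₀ ∪ ({1} : Set (ZMod 2)) ×ˢ E₁ᶜ).ncard : ℤ)
        = (q : ℤ) ^ 2 := by
      rw [ncard_eq_sum_ind, cntG, cnt_compl, hF]
      push_cast
      linarith
    exact_mod_cast h1
  · rw [hB3def]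
    have h1 : ((({0} : Set (ZMod 2)) ×ˢ E₂ ∪ ({1} : Set (ZMod 2)) ×ˢ E₃ᶜ).ncard : ℤ)
        = (q : ℤ) ^ 2 := by
      rw [ncard_eq_sum_ind, cntG, cnt_compl, hF]
      push_cast
      linarith
    exact_mod_cast h1
  · rintro ⟨ε, x⟩ hg
    rw [hB0def, hB1def, hB2def, hB3def]
    have hε : ε = 0 ∨ ε = 1 := (by decide : ∀ a : ZMod 2, a = 0 ∨ a = 1) ε
    rcases hε with hε | hε <;> subst hε
    · -- ε = 0, so x ≠ 0
      have hx : x ≠ 0 := by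
        intro h
        exact hg (by rw [h]; rfl)
      have d0 := dcG0 (cyc ω 4 0 ∪ cyc ω 4 1) (cyc ω 4 0 ∪ cyc ω 4 1)ᶜ
        (cyc ω 4 0 ∪ cyc ω 4 1) (cyc ω 4 0 ∪ cyc ω 4 1)ᶜ x
      rw [sum_compl_compl, hF] at d0
      have d1 := dcG0 (cyc ω 4 2 ∪ cyc ω 4 3) (cyc ω 4 2 ∪ cyc ω 4 3)
        (cyc ω 4 2 ∪ cyc ω 4 3) (cyc ω 4 2 ∪ cyc ω 4 3) x
      have d2 := dcG0 E₀ E₁ᶜ E₀ E₁ᶜ x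
      rw [sum_compl_compl, hF] at d2
      have d3 := dcG0 E₂ E₃ᶜ E₂ E₃ᶜ x
      rw [sum_compl_compl, hF] at d3
      have hcs := S.corr_sum hx
      have hHx := hH x hx
      zify [h2q] at hHx
      rw [diffCount_eq_sum, diffCount_eq_sum, diffCount_eq_sum, diffCount_eq_sum] at hHx
      zify [h22]
      push_cast at d0 d2 d3 ⊢
      linarith [d0, d1, d2, d3, hcs, hHx, hcd0, hE1s, hE3s]
    · -- ε = 1
      have d0 := dcG1 (cyc ω 4 0 ∪ cyc ω 4 1) (cyc ω 4 0 ∪ cyc ω 4 1)ᶜ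
        (cyc ω 4 0 ∪ cyc ω 4 1) (cyc ω 4 0 ∪ cyc ω 4 1)ᶜ x
      rw [sum_compl_left, sum_compl_right] at d0
      have d1 := dcG1 (cyc ω 4 2 ∪ cyc ω 4 3) (cyc ω 4 2 ∪ cyc ω 4 3)
        (cyc ω 4 2 ∪ cyc ω 4 3) (cyc ω 4 2 ∪ cyc ω 4 3) x
      have d2 := dcG1 E₀ E₁ᶜ E₀ E₁ᶜ x
      rw [sum_compl_left, sum_compl_right] at d2
      have d3 := dcG1 E₂ E₃ᶜ E₂ E₃ᶜ x
      rw [sum_compl_left, sum_compl_right] at d3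
      have hcdx := S.corr_diff x
      have hMx := hMix x
      rw [diffCount_eq_sum, diffCount_eq_sum, diffCount_eq_sum, diffCount_eq_sum] at hMx
      have hsq : ((q : ℤ) - 1) ^ 2 = (q : ℤ) ^ 2 - 2 * q + 1 := by ring
      zify [h22]
      linarith [d0, d1, d2, d3, hcdx, hMx, hcd0, hE0s, hE2s, hsq]
end

section
/- Let q ≡ 3 (mod 8) be a prime power, let F be a finite field with q² elements with primitive element ω, and let D = C₀⁽⁸⁾ ∪ C₂⁽⁸⁾ ∪ C₃⁽⁸⁾ ⊆ F. Then |ωD ∩ (ω³D + 1)| + |ω³D ∩ (ωD + 1)| = |ω⁻¹D ∩ (ωD + 1)| + |ωD ∩ (ω⁻¹D + 1)|, where for a subset X ⊆ F and c ∈ F, cX = {cx : x ∈ X} and X + 1 = {x + 1 : x ∈ X}. -/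
namespace StmtAux

variable {F : Type*} [Field F] (ω : F)

lemma cyc_shift (i m : ℤ) : cyc ω 8 (i + 8 * m) = cyc ω 8 i := by
  ext x
  constructor
  · rintro ⟨k, rfl⟩
    exact ⟨m + k, by rw [show i + ((8:ℕ):ℤ) * (m + k) = i + 8*m + ((8:ℕ):ℤ)*k by push_cast; ring]⟩
  · rintro ⟨k, rfl⟩
    exact ⟨k - m, by rw [show i + 8*m + ((8:ℕ):ℤ) * (k - m) = i + ((8:ℕ):ℤ)*k by push_cast; ring]⟩

lemma zpow_mul_cyc (hω : ω ≠ 0) (j i : ℤ) :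
    (fun x => ω ^ j * x) '' cyc ω 8 i = cyc ω 8 (j + i) := by
  ext x
  simp only [Set.mem_image, cyc, Set.mem_setOf_eq]
  constructor
  · rintro ⟨y, ⟨k, rfl⟩, rfl⟩
    exact ⟨k, by rw [← zpow_add₀ hω, show j + (i + ((8:ℕ):ℤ)*k) = j + i + ((8:ℕ):ℤ)*k by ring]⟩
  · rintro ⟨k, rfl⟩
    exact ⟨ω ^ (i + ((8:ℕ):ℤ)*k), ⟨k, rfl⟩,
      by rw [← zpow_add₀ hω, show j + (i + ((8:ℕ):ℤ)*k) = j + i + ((8:ℕ):ℤ)*k by ring]⟩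

-- forward inclusion for Frobenius-type map
lemma frob_cyc_subset (hω : ω ≠ 0) (q : ℕ) (h8 : q % 8 = 3) (i : ℤ) :
    (fun x : F => x ^ q) '' cyc ω 8 i ⊆ cyc ω 8 (3 * i) := by
  have hq8 : (q : ℤ) = 8 * ((q / 8 : ℕ) : ℤ) + 3 := by
    have := Nat.div_add_mod q 8
    omega
  rintro _ ⟨y, ⟨k, rfl⟩, rfl⟩
  refine ⟨((q / 8 : ℕ) : ℤ) * i + (q : ℤ) * k, ?_⟩
  show (ω ^ (i + ((8:ℕ):ℤ) * k)) ^ q = _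
  rw [← zpow_natCast (ω ^ (i + ((8:ℕ):ℤ) * k)) q, ← zpow_mul]
  congr 1
  simp only [Nat.cast_ofNat]
  linear_combination i * hq8

lemma frob_cyc (hω : ω ≠ 0) (q : ℕ) (h8 : q % 8 = 3)
    (hqq : ∀ x : F, (x ^ q) ^ q = x) (i : ℤ) :
    (fun x : F => x ^ q) '' cyc ω 8 i = cyc ω 8 (3 * i) := by
  refine (frob_cyc_subset ω hω q h8 i).antisymm ?_
  have h1 : (fun x : F => x ^ q) '' cyc ω 8 (3 * i) ⊆ cyc ω 8 i := by
    have := frob_cyc_subset ω hω q h8 (3 * i)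
    rwa [show 3 * (3 * i) = i + 8 * i by ring, cyc_shift] at this
  have h2 := Set.image_mono (f := fun x : F => x ^ q) h1
  rwa [Set.image_image, show (fun x : F => (x ^ q) ^ q) = fun x => x from funext hqq,
    Set.image_id'] at h2

lemma transfer (q : ℕ) (hqq : ∀ x : F, (x ^ q) ^ q = x)
    (hadd : ∀ x y : F, (x + y) ^ q = x ^ q + y ^ q) (A B : Set F) :
    (((fun x : F => x ^ q) '' A) ∩ ((fun x => x + 1) '' ((fun x : F => x ^ q) '' B))).ncard
      = (A ∩ ((fun x => x + 1) '' B)).ncard := by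
  have hinj : Function.Injective (fun x : F => x ^ q) :=
    Function.LeftInverse.injective hqq
  have key : (fun x => x + 1) '' ((fun x : F => x ^ q) '' B)
      = (fun x : F => x ^ q) '' ((fun x => x + 1) '' B) := by
    rw [Set.image_image, Set.image_image]
    have : (fun x : F => x ^ q + 1) = fun x : F => (x + 1) ^ q :=
      funext fun x => by rw [hadd, one_pow]
    rw [this]
  rw [key, ← Set.image_inter hinj, Set.ncard_image_of_injective _ hinj]

end StmtAux

open StmtAux

theorem stmt_14 (q : ℕ) (hq : IsPrimePow q) (h8 : q % 8 = 3)
    (F : Type*) [Field F] [Fintype F] (hF : Fintype.card F = q ^ 2)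
    (ω : F) (hω : ∀ x : F, x ≠ 0 → ∃ k : ℕ, x = ω ^ k) :
    let D : Set F := cyc ω 8 0 ∪ cyc ω 8 2 ∪ cyc ω 8 3
    ((fun x => ω * x) '' D ∩ ((fun x => x + 1) '' ((fun x => ω ^ 3 * x) '' D))).ncard
      + ((fun x => ω ^ 3 * x) '' D ∩ ((fun x => x + 1) '' ((fun x => ω * x) '' D))).ncard
    = ((fun x => ω ^ (-1 : ℤ) * x) '' D ∩ ((fun x => x + 1) '' ((fun x => ω * x) '' D))).ncard
      + ((fun x => ω * x) '' D ∩
          ((fun x => x + 1) '' ((fun x => ω ^ (-1 : ℤ) * x) '' D))).ncard := by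
  intro D
  classical
  have hD : D = cyc ω 8 0 ∪ cyc ω 8 2 ∪ cyc ω 8 3 := rfl
  have hq3 : 3 ≤ q := by
    have := Nat.mod_le q 8
    omega
  -- ω is nonzero
  have hω0 : ω ≠ 0 := by
    intro h0
    have hcard : 1 < Fintype.card Fˣ := by
      rw [Fintype.card_units, hF]
      have : 9 ≤ q ^ 2 := by nlinarith
      omega
    obtain ⟨u, hu⟩ := Fintype.exists_ne_of_one_lt_card hcard 1
    obtain ⟨k, hk⟩ := hω (u : F) u.ne_zero
    cases k with
    | zero =>
      simp only [pow_zero] at hk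
      exact hu (Units.ext (by simpa using hk))
    | succ m =>
      rw [h0, zero_pow (Nat.succ_ne_zero m)] at hk
      exact u.ne_zero hk
  -- characteristic
  obtain ⟨p, n, hp, hn, hpn⟩ := hq
  have hp' : p.Prime := hp.nat_prime
  obtain ⟨m, hrp, hcard⟩ := FiniteField.card F (ringChar F)
  have hpr : p = ringChar F := by
    have h1 : p ∣ (ringChar F) ^ (m : ℕ) := by
      rw [← hcard, hF, ← hpn]
      exact dvd_pow (dvd_pow_self p hn.ne') (by norm_num)
    exact (Nat.prime_dvd_prime_iff_eq hp' hrp).mp (hp'.dvd_of_dvd_pow h1)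
  haveI hcharP : CharP F p := hpr ▸ ringChar.charP F
  haveI : Fact p.Prime := ⟨hp'⟩
  have hadd : ∀ x y : F, (x + y) ^ q = x ^ q + y ^ q := by
    intro x y
    rw [← hpn]
    exact add_pow_char_pow ..
  have hqq : ∀ x : F, (x ^ q) ^ q = x := by
    intro x
    rw [← pow_mul, show q * q = Fintype.card F by rw [hF, sq]]
    exact FiniteField.pow_card x
  -- descriptions of the three dilated sets
  have hA1 : (fun x => ω * x) '' D = cyc ω 8 1 ∪ cyc ω 8 3 ∪ cyc ω 8 4 := by
    have h : (fun x : F => ω * x) = fun x => ω ^ (1 : ℤ) * x := by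
      funext x; rw [zpow_one]
    rw [hD, h, Set.image_union, Set.image_union, zpow_mul_cyc ω hω0, zpow_mul_cyc ω hω0,
      zpow_mul_cyc ω hω0]
    norm_num
  have hA3 : (fun x => ω ^ 3 * x) '' D = cyc ω 8 3 ∪ cyc ω 8 5 ∪ cyc ω 8 6 := by
    have h : (fun x : F => ω ^ 3 * x) = fun x => ω ^ (3 : ℤ) * x := by
      funext x; rw [← zpow_natCast ω 3]; norm_num
    rw [hD, h, Set.image_union, Set.image_union, zpow_mul_cyc ω hω0, zpow_mul_cyc ω hω0,
      zpow_mul_cyc ω hω0]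
    norm_num
  have hAm : (fun x => ω ^ (-1 : ℤ) * x) '' D = cyc ω 8 (-1) ∪ cyc ω 8 1 ∪ cyc ω 8 2 := by
    rw [hD, Set.image_union, Set.image_union, zpow_mul_cyc ω hω0, zpow_mul_cyc ω hω0,
      zpow_mul_cyc ω hω0]
    norm_num
  -- action of Frobenius on the three sets
  have hs1 : (fun x : F => x ^ q) '' ((fun x => ω * x) '' D) = (fun x => ω * x) '' D := by
    rw [hA1, Set.image_union, Set.image_union, frob_cyc ω hω0 q h8 hqq,
      frob_cyc ω hω0 q h8 hqq, frob_cyc ω hω0 q h8 hqq]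
    have e9 : cyc ω 8 (3 * 3) = cyc ω 8 1 := by
      rw [show (3 * 3 : ℤ) = 1 + 8 * 1 by norm_num, cyc_shift]
    have e12 : cyc ω 8 (3 * 4) = cyc ω 8 4 := by
      rw [show (3 * 4 : ℤ) = 4 + 8 * 1 by norm_num, cyc_shift]
    rw [e9, e12, show (3 * 1 : ℤ) = 3 by norm_num]
    ext x
    simp only [Set.mem_union]
    tauto
  have hs3 : (fun x : F => x ^ q) '' ((fun x => ω ^ 3 * x) '' D)
      = (fun x => ω ^ (-1 : ℤ) * x) '' D := by
    rw [hA3, hAm, Set.image_union, Set.image_union, frob_cyc ω hω0 q h8 hqq,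
      frob_cyc ω hω0 q h8 hqq, frob_cyc ω hω0 q h8 hqq]
    have e9 : cyc ω 8 (3 * 3) = cyc ω 8 1 := by
      rw [show (3 * 3 : ℤ) = 1 + 8 * 1 by norm_num, cyc_shift]
    have e15 : cyc ω 8 (3 * 5) = cyc ω 8 7 := by
      rw [show (3 * 5 : ℤ) = 7 + 8 * 1 by norm_num, cyc_shift]
    have e18 : cyc ω 8 (3 * 6) = cyc ω 8 2 := by
      rw [show (3 * 6 : ℤ) = 2 + 8 * 2 by norm_num, cyc_shift]
    have em1 : cyc ω 8 (-1) = cyc ω 8 7 := by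
      rw [show (-1 : ℤ) = 7 + 8 * (-1) by norm_num, cyc_shift]
    rw [e9, e15, e18, em1]
    ext x
    simp only [Set.mem_union]
    tauto
  -- transfer both LHS terms
  have T1 := transfer q hqq hadd ((fun x => ω * x) '' D) ((fun x => ω ^ 3 * x) '' D)
  rw [hs1, hs3] at T1
  have T2 := transfer q hqq hadd ((fun x => ω ^ 3 * x) '' D) ((fun x => ω * x) '' D)
  rw [hs3, hs1] at T2
  omega
end
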